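/- arXiv:1406.3794 — 8 statements merged into one kernel-verified Lean document; each statement's English description precedes it below -/
import Mathlib

section
/- Let A be a finite abelian group, p a prime not dividing |A|, s ≥ 1, and a ∈ A. If S(a) = S(-a) and a ≠ -a (type II class), then the cardinality of S(a) is even; moreover, if |S(a)| = 2ν, then -a = p^{sν}·a. -/
/-- If the `p^s`-cyclotomic class of `a` satisfies `S(a) = S(-a)` and `a ≠ -a`
(type II), then its cardinality is even, and if `|S(a)| = 2ν` then
`-a = p^{sν}·a`. -/
theorem cyclotomic_class_typeII (A : Type*) [AddCommGroup A] [Fintype A]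
    (p : ℕ) (hp : p.Prime) (hpA : ¬ p ∣ Fintype.card A)
    (s : ℕ) (hs : 1 ≤ s) (a : A)
    (hSa : {b : A | ∃ i : ℕ, b = p ^ (s * i) • a} =
           {b : A | ∃ i : ℕ, b = p ^ (s * i) • (-a)})
    (hne : a ≠ -a) :
    Even (Set.ncard {b : A | ∃ i : ℕ, b = p ^ (s * i) • a}) ∧
    ∀ ν : ℕ, Set.ncard {b : A | ∃ i : ℕ, b = p ^ (s * i) • a} = 2 * ν →
      -a = p ^ (s * ν) • a := by
  classical
  set q : ℕ := p ^ s with hq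
  set n : ℕ := addOrderOf a with hn
  haveI : NeZero n := ⟨(addOrderOf_pos a).ne'⟩
  have hcop : Nat.Coprime q n := by
    have h1 : Nat.Coprime p (Fintype.card A) := (hp.coprime_iff_not_dvd).mpr hpA
    exact (h1.coprime_dvd_right addOrderOf_dvd_card).pow_left _
  set u : (ZMod n)ˣ := ZMod.unitOfCoprime q hcop with hu
  set d : ℕ := orderOf u with hd
  have hd0 : 0 < d := orderOf_pos u
  set f : ℕ → A := fun i => q ^ i • a with hf
  -- key equivalence
  have key : ∀ i j : ℕ, f i = f j ↔ i ≡ j [MOD d] := by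
    intro i j
    show q ^ i • a = q ^ j • a ↔ _
    rw [nsmul_eq_nsmul_iff_modEq, ← ZMod.natCast_eq_natCast_iff, Nat.cast_pow q i,
      Nat.cast_pow q j, ← ZMod.coe_unitOfCoprime q hcop, ← Units.val_pow_eq_pow_val,
      ← Units.val_pow_eq_pow_val, Units.val_inj]
    exact pow_eq_pow_iff_modEq
  have hmod : ∀ i : ℕ, f i = f (i % d) :=
    fun i => (key i (i % d)).mpr (Nat.mod_modEq i d).symm
  -- the set is the image of the finset range d
  have hsetq : ∀ i : ℕ, p ^ (s * i) • a = f i := fun i => by rw [hf, hq, pow_mul]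
  have hSeq : {b : A | ∃ i : ℕ, b = p ^ (s * i) • a} = ↑((Finset.range d).image f) := by
    ext b
    simp only [Set.mem_setOf_eq, Finset.coe_image, Set.mem_image, Finset.mem_coe,
      Finset.mem_range]
    constructor
    · rintro ⟨i, rfl⟩
      exact ⟨i % d, Nat.mod_lt _ hd0, by rw [hsetq i]; exact (hmod i).symm⟩
    · rintro ⟨i, _, rfl⟩
      exact ⟨i, (hsetq i).symm⟩
  have hcard : Set.ncard {b : A | ∃ i : ℕ, b = p ^ (s * i) • a} = d := by
    rw [hSeq, Set.ncard_coe_finset, Finset.card_image_of_injOn, Finset.card_range]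
    intro i hi j hj hij
    simp only [Finset.coe_range, Set.mem_Iio] at hi hj
    have := (key i j).mp hij
    rwa [Nat.ModEq, Nat.mod_eq_of_lt hi, Nat.mod_eq_of_lt hj] at this
  -- -a is in the class
  have hmem : -a ∈ {b : A | ∃ i : ℕ, b = p ^ (s * i) • a} := by
    rw [hSa]
    exact ⟨0, by simp⟩
  obtain ⟨i, hi⟩ := hmem
  rw [hsetq] at hi
  set j : ℕ := i % d with hj
  have hja : -a = f j := by rw [hj, ← hmod, hi]
  have hjd : j < d := Nat.mod_lt _ hd0
  have hj0 : j ≠ 0 := by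
    intro h
    apply hne
    have h2 : -a = q ^ 0 • a := h ▸ hja
    simpa using h2.symm
  -- f (2j) = f 0
  have h2j : f (j + j) = f 0 := by
    show q ^ (j + j) • a = q ^ 0 • a
    have h' : q ^ j • a = -a := hja.symm
    rw [pow_add, mul_smul, pow_zero, one_smul, h', smul_neg, h', neg_neg]
  have hdvd : d ∣ j + j := by
    have := (key (j + j) 0).mp h2j
    rwa [Nat.modEq_zero_iff_dvd] at this
  have hdj : d = 2 * j := by
    obtain ⟨c, hc⟩ := hdvd
    have hc0 : c ≠ 0 := by
      rintro rfl
      omega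
    have hc2 : c < 2 := by
      by_contra h
      push_neg at h
      have : 2 * d ≤ d * c := by
        calc 2 * d = d * 2 := by ring
        _ ≤ d * c := Nat.mul_le_mul_left d h
      omega
    interval_cases c <;> omega
  constructor
  · rw [hcard, hdj]
    exact ⟨j, by ring⟩
  · intro ν hν
    rw [hcard, hdj] at hν
    have : ν = j := by omega
    rw [this, hsetq j]
    exact hja
end

section
/- Let A be a finite abelian group, p a prime not dividing |A|, and s an even positive integer. If a ∈ A satisfies S(a) = S(-p^{s/2}·a) (a class of type II′), then the cardinality ν of S(a) is odd; moreover -a = p^{sν/2}·a and -p^{s/2}·a = p^{s(ν+1)/2}·a. -/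
/-- If `s` is even and the `p^s`-cyclotomic class of `a` satisfies
`S(a) = S(-p^{s/2}·a)` (type II′), then its cardinality `ν` is odd, and
moreover `-a = p^{sν/2}·a` and `-p^{s/2}·a = p^{s(ν+1)/2}·a`. -/
theorem cyclotomic_class_typeII' (A : Type*) [AddCommGroup A] [Fintype A]
    (p : ℕ) (hp : p.Prime) (hpA : ¬ p ∣ Fintype.card A)
    (s : ℕ) (hs : 1 ≤ s) (hseven : Even s) (a : A)
    (hSa : {b : A | ∃ i : ℕ, b = p ^ (s * i) • a} =
           {b : A | ∃ i : ℕ, b = p ^ (s * i) • (p ^ (s / 2) • (-a))}) :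
    Odd (Set.ncard {b : A | ∃ i : ℕ, b = p ^ (s * i) • a}) ∧
    ∀ ν : ℕ, Set.ncard {b : A | ∃ i : ℕ, b = p ^ (s * i) • a} = ν →
      (-a = p ^ (s / 2 * ν) • a ∧
       p ^ (s / 2) • (-a) = p ^ (s / 2 * (ν + 1)) • a) := by
  classical
  set n := addOrderOf a with hn
  haveI : NeZero n := ⟨(addOrderOf_pos a).ne'⟩
  set t := s / 2 with ht
  have hst : 2 * t = s := by
    obtain ⟨k, hk⟩ := hseven; omega
  have hndvd : n ∣ Fintype.card A := addOrderOf_dvd_card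
  have hpn : Nat.Coprime p n :=
    Nat.Coprime.coprime_dvd_right hndvd (hp.coprime_iff_not_dvd.mpr hpA)
  set q := p ^ t with hq
  have hqn : Nat.Coprime q n := hpn.pow_left _
  set w : (ZMod n)ˣ := ZMod.unitOfCoprime q hqn with hw
  have hwcoe : (w : ZMod n) = (q : ZMod n) := ZMod.coe_unitOfCoprime _ _
  set d := orderOf (w ^ 2) with hd
  have hdpos : 0 < d := orderOf_pos _
  -- bridge lemmas
  have bridge : ∀ k m : ℕ, k • a = m • a ↔ (k : ZMod n) = (m : ZMod n) := by
    intro k m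
    rw [nsmul_eq_nsmul_iff_modEq, ZMod.natCast_eq_natCast_iff]
  have bridge0 : ∀ k : ℕ, k • a = 0 ↔ (k : ZMod n) = 0 := by
    intro k
    rw [← addOrderOf_dvd_iff_nsmul_eq_zero, ← ZMod.natCast_eq_zero_iff]
  -- exponent rewriting : p^(s*i) = (q^2)^i
  have hpow : ∀ i : ℕ, p ^ (s * i) = (q ^ 2) ^ i := by
    intro i
    rw [hq, ← pow_mul, ← pow_mul, ← hst]; ring_nf
  -- from hSa : exists odd e with (q : ZMod n)^e = -1
  have ha0 : a ∈ {b : A | ∃ i : ℕ, b = p ^ (s * i) • a} := ⟨0, by simp⟩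
  rw [hSa] at ha0
  obtain ⟨i₀, hi₀⟩ := ha0
  have he : ((q : ZMod n)) ^ (2 * i₀ + 1) = -1 := by
    have h1 : a = -((p ^ (s * i₀) * q) • a) := by
      conv_lhs => rw [hi₀]
      rw [smul_smul, smul_neg]
    have h2 : (1 + p ^ (s * i₀) * q) • a = 0 := by
      rw [add_nsmul, one_nsmul]
      nth_rewrite 1 [h1]
      simp
    have h3 : ((1 + p ^ (s * i₀) * q : ℕ) : ZMod n) = 0 := (bridge0 _).mp h2
    have h4 : p ^ (s * i₀) * q = q ^ (2 * i₀ + 1) := by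
      rw [hpow, ← pow_mul, ← pow_succ]
    rw [h4] at h3
    push_cast at h3
    linear_combination h3
  -- units version
  have hwe : w ^ (2 * i₀ + 1) = (-1 : (ZMod n)ˣ) := by
    apply Units.ext
    push_cast [hwcoe]
    simpa using he
  have hde : d ∣ 2 * i₀ + 1 := by
    apply orderOf_dvd_of_pow_eq_one
    rw [← pow_mul, mul_comm 2, pow_mul, hwe]
    simp
  have hdodd : Odd d := by
    rcases Nat.even_or_odd d with hev | hod
    · exfalso
      obtain ⟨c, hc⟩ := hde
      have h2 : Even (2 * i₀ + 1) := hc ▸ hev.mul_right c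
      obtain ⟨m, hm⟩ := h2
      omega
    · exact hod
  -- w ^ d = -1
  have hwd : w ^ d = (-1 : (ZMod n)ˣ) := by
    obtain ⟨c, hc⟩ := hde
    have hcodd : Odd c := by
      rcases Nat.even_or_odd c with hev | hod
      · exfalso
        have h2 : Even (2 * i₀ + 1) := hc ▸ hev.mul_left d
        obtain ⟨m, hm⟩ := h2
        omega
      · exact hod
    obtain ⟨m, hm⟩ := hcodd
    have h2 : (w ^ d) ^ (2 * m) = 1 := by
      have heq : (w ^ d) ^ (2 * m) = ((w ^ 2) ^ d) ^ m := by
        rw [← pow_mul, ← pow_mul, ← pow_mul]; congr 1; ring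
      rw [heq, hd, pow_orderOf_eq_one, one_pow]
    calc w ^ d = (w ^ d) ^ (2 * m) * w ^ d := by rw [h2, one_mul]
    _ = w ^ (d * (2 * m) + d) := by rw [pow_add, ← pow_mul]
    _ = w ^ (2 * i₀ + 1) := by rw [show d * (2 * m) + d = d * (2 * m + 1) by ring, ← hm, ← hc]
    _ = -1 := hwe
  -- general: w^k = -1 gives -a = q^k • a
  have hkey : ∀ k : ℕ, w ^ k = (-1 : (ZMod n)ˣ) → -a = q ^ k • a := by
    intro k hk
    have hcoe : ((q : ZMod n)) ^ k = -1 := by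
      have := congrArg (Units.val) hk
      push_cast [hwcoe] at this
      simpa using this
    have h3 : ((1 + q ^ k : ℕ) : ZMod n) = 0 := by
      push_cast
      rw [hcoe]; ring
    have h2 : (1 + q ^ k) • a = 0 := (bridge0 _).mpr h3
    rw [add_nsmul, one_nsmul] at h2
    exact neg_eq_iff_add_eq_zero.mpr h2
  -- congruence characterization
  have hcoe2 : ∀ i : ℕ, (((q ^ 2) ^ i : ℕ) : ZMod n) = (((w ^ 2) ^ i : (ZMod n)ˣ) : ZMod n) := by
    intro i
    push_cast [hwcoe]
    ring
  have hcong : ∀ i j : ℕ, ((q ^ 2) ^ i • a = (q ^ 2) ^ j • a) ↔ i ≡ j [MOD d] := by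
    intro i j
    rw [bridge, hcoe2, hcoe2, ← Units.ext_iff, pow_eq_pow_iff_modEq, ← hd]
  -- the set and its cardinality
  have hset : {b : A | ∃ i : ℕ, b = p ^ (s * i) • a} =
      ↑((Finset.range d).image (fun i => (q ^ 2) ^ i • a)) := by
    ext b
    simp only [Set.mem_setOf_eq, Finset.coe_image, Set.mem_image, Finset.mem_coe,
      Finset.mem_range]
    constructor
    · rintro ⟨i, rfl⟩
      exact ⟨i % d, Nat.mod_lt _ hdpos,
        by rw [hpow]; exact (hcong _ _).mpr (Nat.mod_modEq i d)⟩
    · rintro ⟨i, hi, rfl⟩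
      exact ⟨i, by rw [hpow]⟩
  have hncard : Set.ncard {b : A | ∃ i : ℕ, b = p ^ (s * i) • a} = d := by
    rw [hset, Set.ncard_coe_finset, Finset.card_image_of_injOn, Finset.card_range]
    intro i hi j hj hij
    simp only [Finset.coe_range, Set.mem_Iio] at hi hj
    have hm := (hcong i j).mp hij
    rw [Nat.ModEq, Nat.mod_eq_of_lt hi, Nat.mod_eq_of_lt hj] at hm
    exact hm
  refine ⟨by rw [hncard]; exact hdodd, ?_⟩
  intro ν hν
  have hνd : ν = d := by rw [← hν, hncard]
  subst hνd
  constructor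
  · rw [show p ^ (t * d) = q ^ d by rw [hq, ← pow_mul]]
    exact hkey d hwd
  · rw [hkey d hwd, smul_smul, hq, ← pow_mul, ← pow_add]
    congr 1
    ring
end

section
/- Let q be a prime power, A a finite abelian group with gcd(|A|, q^2) = 1, and h ∈ A, h ≠ 0. Then S_{q^2}(h) ≠ S_{q^2}(-q·h) if and only if (ord(h), q) is evenly good or bad; equivalently, S_{q^2}(h) = S_{q^2}(-q·h) if and only if ord(h) divides q^t + 1 for some odd positive integer t. -/
/-- For `h ≠ 0`, the `q²`-cyclotomic classes satisfy
`S_{q²}(h) = S_{q²}(-q·h)` if and only if `ord(h)` divides `q^t + 1` for some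
odd positive integer `t` (i.e. `(ord(h), q)` is oddly good); equivalently,
`S_{q²}(h) ≠ S_{q²}(-q·h)` iff `(ord(h), q)` is evenly good or bad. -/
theorem cyclotomic_class_typeII'_iff_oddly_good (A : Type*) [AddCommGroup A] [Fintype A]
    (q : ℕ) (hq : IsPrimePow q) (hqA : Nat.gcd (Fintype.card A) (q ^ 2) = 1)
    (h : A) (hh : h ≠ 0) :
    {b : A | ∃ i : ℕ, b = (q ^ 2) ^ i • h} =
      {b : A | ∃ i : ℕ, b = (q ^ 2) ^ i • (q • (-h))} ↔
      ∃ t : ℕ, Odd t ∧ addOrderOf h ∣ q ^ t + 1 := by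
  have hq0 : 0 < q := hq.pos
  set n := addOrderOf h with hn
  have hn0 : 0 < n := addOrderOf_pos h
  have hcop : Nat.Coprime n (q ^ 2) :=
    Nat.Coprime.coprime_dvd_left (addOrderOf_dvd_card) hqA
  -- periodicity
  set m := n.totient with hm
  have hm0 : 0 < m := Nat.totient_pos.mpr hn0
  have hone : (q ^ 2) ^ m • h = h := by
    have hmod : (q ^ 2) ^ m ≡ 1 [MOD n] := Nat.ModEq.pow_totient hcop.symm
    have h1 : 1 ≤ (q ^ 2) ^ m := Nat.one_le_pow _ _ (by positivity)
    have hdvd : n ∣ (q ^ 2) ^ m - 1 := (Nat.modEq_iff_dvd' h1).mp hmod.symm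
    have hz : ((q ^ 2) ^ m - 1) • h = 0 := addOrderOf_dvd_iff_nsmul_eq_zero.mp hdvd
    calc (q ^ 2) ^ m • h = (((q ^ 2) ^ m - 1) + 1) • h := by rw [Nat.sub_add_cancel h1]
      _ = ((q ^ 2) ^ m - 1) • h + 1 • h := add_nsmul h _ 1
      _ = h := by rw [hz, one_smul, zero_add]
  have hfix : ∀ s : ℕ, (q ^ 2) ^ (m * s) • h = h := by
    intro s
    induction s with
    | zero => simp
    | succ s ih => rw [Nat.mul_succ, pow_add, mul_smul, hone, ih]
  constructor
  · intro hset
    have hmem : h ∈ {b : A | ∃ i : ℕ, b = (q ^ 2) ^ i • (q • (-h))} := by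
      rw [← hset]; exact ⟨0, by simp⟩
    obtain ⟨i, hi⟩ := hmem
    refine ⟨2 * i + 1, ⟨i, by ring⟩, ?_⟩
    have hrw : (q ^ 2) ^ i • (q • (-h)) = -(q ^ (2 * i + 1) • h) := by
      rw [smul_neg, smul_neg, ← mul_smul, ← pow_mul, ← pow_succ]
    rw [hrw] at hi
    have hx : q ^ (2 * i + 1) • h = -h := by
      simpa using (congrArg Neg.neg hi).symm
    have hz : (q ^ (2 * i + 1) + 1) • h = 0 := by
      rw [add_nsmul, one_smul, hx, neg_add_cancel]
    exact addOrderOf_dvd_iff_nsmul_eq_zero.mpr hz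
  · rintro ⟨t, ⟨i, ht⟩, hdvd⟩
    have ht' : t = 2 * i + 1 := by omega
    subst ht'
    have hz : (q ^ (2 * i + 1) + 1) • h = 0 := addOrderOf_dvd_iff_nsmul_eq_zero.mp hdvd
    have hneg : q ^ (2 * i + 1) • h = -h := by
      rw [add_nsmul, one_smul] at hz
      exact eq_neg_of_add_eq_zero_left hz
    have hqneg : q • (-h) = (q ^ 2) ^ (i + 1) • h := by
      have e : (q ^ 2) ^ (i + 1) = q * q ^ (2 * i + 1) := by ring
      rw [smul_neg, e, mul_smul, hneg, smul_neg]
    ext b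
    simp only [Set.mem_setOf_eq]
    constructor
    · rintro ⟨j, rfl⟩
      refine ⟨j + m * (i + 1) - (i + 1), ?_⟩
      have hge : i + 1 ≤ m * (i + 1) := Nat.le_mul_of_pos_left (i + 1) hm0
      have hk : (j + m * (i + 1) - (i + 1)) + (i + 1) = j + m * (i + 1) := by omega
      rw [hqneg, ← mul_smul, ← pow_add, hk, pow_add, mul_smul, hfix]
    · rintro ⟨k, rfl⟩
      exact ⟨k + (i + 1), by rw [hqneg, ← mul_smul, ← pow_add]⟩
end

section
/- Let p be a prime, r ≥ 1, and G a finite abelian group. Suppose the group ring (ℤ/p^r ℤ)[G] contains an ideal C such that C equals its Euclidean dual C^⊥ (with respect to the standard bilinear form ⟨∑ α_g Y^g, ∑ β_g Y^g⟩ = ∑ α_g β_g). Then r is even, or p = 2 and |G| is even. -/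
open AddMonoidAlgebra

section Auxiliary

section HomCard
variable (M : ℕ) [NeZero M]

lemma card_hom_zmod_le (n : ℕ) (hn : n ≠ 0) :
    Nat.card (ZMod n →+ ZMod M) ≤ n := by
  haveI : NeZero n := ⟨hn⟩
  have hM : 0 < M := Nat.pos_of_ne_zero (NeZero.ne M)
  have hnpos : 0 < n := Nat.pos_of_ne_zero hn
  have happ : ∀ (f : ZMod n →+ ZMod M) (x : ZMod n), f x = x.val • f 1 := by
    intro f x
    conv_lhs => rw [show x = x.val • (1 : ZMod n) by
      rw [nsmul_eq_mul, mul_one, ZMod.natCast_rightInverse x]]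
    rw [map_nsmul]
  have key : ∀ f : ZMod n →+ ZMod M, M ∣ n * (f 1).val := by
    intro f
    have h1 : n • (f 1) = 0 := by
      rw [← map_nsmul]
      have h2 : n • (1 : ZMod n) = 0 := by
        rw [nsmul_eq_mul, mul_one, ZMod.natCast_self]
      rw [h2, map_zero]
    have : ((n * (f 1).val : ℕ) : ZMod M) = 0 := by
      rw [Nat.cast_mul, ZMod.natCast_rightInverse (f 1), ← nsmul_eq_mul, h1]
    exact (ZMod.natCast_eq_zero_iff _ _).mp this
  have hF : ∀ f : ZMod n →+ ZMod M, n * (f 1).val / M < n := by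
    intro f
    rw [Nat.div_lt_iff_lt_mul hM]
    calc n * (f 1).val < n * M := by exact Nat.mul_lt_mul_of_le_of_lt (le_refl n) (ZMod.val_lt _) hnpos
      _ = n * M := rfl
  let F : (ZMod n →+ ZMod M) → Fin n := fun f => ⟨n * (f 1).val / M, hF f⟩
  have hFinj : Function.Injective F := by
    intro f g hfg
    have h1 : n * (f 1).val / M = n * (g 1).val / M := congrArg Fin.val hfg
    have h2 : n * (f 1).val = n * (g 1).val := by
      rw [← Nat.div_mul_cancel (key f), ← Nat.div_mul_cancel (key g), h1]
    have h3 : (f 1).val = (g 1).val := Nat.eq_of_mul_eq_mul_left hnpos h2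
    have h4 : f 1 = g 1 := by apply ZMod.val_injective; exact h3
    ext x
    rw [happ f x, happ g x, h4]
  calc Nat.card (ZMod n →+ ZMod M) ≤ Nat.card (Fin n) :=
        Nat.card_le_card_of_injective F hFinj
    _ = n := by simp

lemma card_hom_le (A : Type*) [AddCommGroup A] [Finite A] :
    Nat.card (A →+ ZMod M) ≤ Nat.card A := by
  classical
  obtain ⟨ι, hι, n, hn, ⟨e⟩⟩ := AddCommGroup.equiv_directSum_zmod_of_finite' A
  haveI := hι
  let e2 : A ≃+ ∀ i, ZMod (n i) :=
    e.trans { DFinsupp.equivFunOnFintype with map_add' := fun a b => DFinsupp.coe_add a b }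
  have E : (A →+ ZMod M) ≃ (∀ i, ZMod (n i) →+ ZMod M) :=
    (e2.addMonoidHomCongrLeft (N := ZMod M)).toEquiv.trans
      (Pi.addMonoidHomAddEquiv _ _).toEquiv
  rw [Nat.card_congr E, Nat.card_congr e2.toEquiv, Nat.card_pi, Nat.card_pi]
  refine Finset.prod_le_prod (fun i _ => Nat.zero_le _) (fun i _ => ?_)
  rw [Nat.card_zmod]
  exact card_hom_zmod_le M (n i) (by have := hn i; omega)

end HomCard

lemma card_selfdual (M : ℕ) [NeZero M] {ι : Type*} [Fintype ι] [DecidableEq ι]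
    (A : AddSubgroup (ι → ZMod M))
    (hA : ∀ v, v ∈ A ↔ ∀ u ∈ A, ∑ i, u i * v i = 0) :
    Nat.card A ^ 2 = M ^ Fintype.card ι := by
  classical
  -- the bilinear form as a hom in the second variable, for fixed first variable
  let form : (ι → ZMod M) → (ι → ZMod M) →+ ZMod M := fun a =>
    { toFun := fun s => ∑ i, a i * s i
      map_zero' := by simp
      map_add' := by intro x y; simp [mul_add, Finset.sum_add_distrib] }
  have form_apply : ∀ a s, form a s = ∑ i, a i * s i := fun _ _ => rfl
  -- θ : D →+ (A →+ ZMod M), s ↦ ⟨b ↦ ∑ b i * s i⟩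
  let θ : (ι → ZMod M) →+ (↥A →+ ZMod M) :=
    { toFun := fun s =>
        { toFun := fun b => ∑ i, (b : ι → ZMod M) i * s i
          map_zero' := by simp
          map_add' := by intro x y; simp [add_mul, Finset.sum_add_distrib] }
      map_zero' := by ext b; simp
      map_add' := by intro s t; ext b; simp [mul_add, Finset.sum_add_distrib] }
  have hker : ∀ s ∈ A, θ s = 0 := by
    intro s hs
    ext b
    simpa [θ] using (hA s).mp hs (b : ι → ZMod M) b.2
  let f₁ : ((ι → ZMod M) ⧸ A) →+ (↥A →+ ZMod M) := QuotientAddGroup.lift A θ hker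
  have hf₁ : Function.Injective f₁ := by
    rw [injective_iff_map_eq_zero]
    intro q hq
    obtain ⟨s, rfl⟩ := QuotientAddGroup.mk_surjective q
    have hs : ∀ b : ↥A, ∑ i, (b : ι → ZMod M) i * s i = 0 := by
      intro b
      have := DFunLike.congr_fun hq b
      exact (show (∑ i, (b : ι → ZMod M) i * s i) = 0 from this)
    have : s ∈ A := (hA s).mpr (fun u hu => hs ⟨u, hu⟩)
    simpa [QuotientAddGroup.eq_zero_iff] using this
  haveI : Finite (↥A →+ ZMod M) := FunLike.finite _
  haveI : Finite (((ι → ZMod M) ⧸ A) →+ ZMod M) := FunLike.finite _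
  have h1 : Nat.card ((ι → ZMod M) ⧸ A) ≤ Nat.card ↥A :=
    le_trans (Nat.card_le_card_of_injective f₁ hf₁) (card_hom_le M _)
  -- second injection
  let f₂ : ↥A → (((ι → ZMod M) ⧸ A) →+ ZMod M) := fun a =>
    QuotientAddGroup.lift A (form (a : ι → ZMod M))
      (fun x hx => (hA x).mp hx (a : ι → ZMod M) a.2)
  have hf₂ : Function.Injective f₂ := by
    intro a b hab
    apply Subtype.ext
    funext i
    have := DFunLike.congr_fun hab (QuotientAddGroup.mk (Pi.single i 1))
    simpa [form_apply, Pi.single_apply, mul_ite, Finset.sum_ite_eq'] using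
      (show form (a : ι → ZMod M) (Pi.single i 1) = form (b : ι → ZMod M) (Pi.single i 1) from this)
  have h2 : Nat.card ↥A ≤ Nat.card ((ι → ZMod M) ⧸ A) :=
    le_trans (Nat.card_le_card_of_injective f₂ hf₂) (card_hom_le M _)
  have heq : Nat.card ↥A = Nat.card ((ι → ZMod M) ⧸ A) := le_antisymm h2 h1
  have hD : Nat.card (ι → ZMod M) = Nat.card ((ι → ZMod M) ⧸ A) * Nat.card ↥A :=
    AddSubgroup.card_eq_card_quotient_mul_card_addSubgroup A
  have hDcard : Nat.card (ι → ZMod M) = M ^ Fintype.card ι := by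
    rw [Nat.card_pi]
    simp [Nat.card_zmod]
  rw [sq]
  nth_rewrite 1 [heq]
  rw [← hD]
  exact hDcard

end Auxiliary



/-- If the group ring `(ℤ/p^rℤ)[G]` of a finite abelian group `G` contains a
Euclidean self-dual ideal (with respect to `⟨u,v⟩ = ∑_g u_g v_g`), then `r` is
even, or `p = 2` and `|G|` is even. -/
theorem exists_euclidean_self_dual_ideal_necessary
    (p r : ℕ) (hp : p.Prime) (hr : 1 ≤ r)
    (G : Type*) [AddCommGroup G] [Fintype G]
    (C : Ideal (AddMonoidAlgebra (ZMod (p ^ r)) G))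
    (hC : ∀ v : AddMonoidAlgebra (ZMod (p ^ r)) G,
      v ∈ C ↔ ∀ u ∈ C, ∑ g : G, u.coeff g * v.coeff g = 0) :
    Even r ∨ (p = 2 ∧ Even (Fintype.card G)) := by
  classical
  haveI : NeZero (p ^ r) := ⟨pow_ne_zero r hp.pos.ne'⟩
  set n := Fintype.card G with hn
  have hn0 : n ≠ 0 := Fintype.card_ne_zero
  set a := n.factorization p with ha
  set m := n / p ^ a with hm
  have hmn : p ^ a * m = n := Nat.ordProj_mul_ordCompl_eq_self n p
  have hpm : ¬ p ∣ m := Nat.not_dvd_ordCompl hp hn0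
  -- the p'-torsion subgroup
  let H : AddSubgroup G :=
    { carrier := {g | m • g = 0}
      zero_mem' := by simp
      add_mem' := by
        intro x y hx hy
        simp only [Set.mem_setOf_eq, smul_add] at *
        rw [hx, hy, add_zero]
      neg_mem' := by
        intro x hx
        simp only [Set.mem_setOf_eq, smul_neg] at *
        rw [hx, neg_zero] }
  have hmemH : ∀ g : G, g ∈ H ↔ m • g = 0 := fun g => Iff.rfl
  haveI : Fintype (G ⧸ H) := Fintype.ofFinite _
  let π : G →+ (G ⧸ H) := QuotientAddGroup.mk' H
  have hπsurj : Function.Surjective π := QuotientAddGroup.mk'_surjective H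
  have hπzero : ∀ g : G, π g = 0 ↔ g ∈ H := fun g => QuotientAddGroup.eq_zero_iff g
  have hexp : ∀ x : G ⧸ H, p ^ a • x = 0 := by
    intro x
    obtain ⟨g, rfl⟩ := hπsurj x
    rw [← map_nsmul]
    rw [hπzero]
    show m • (p ^ a • g) = 0
    rw [smul_smul, mul_comm, hmn]
    rw [hn]
    exact card_nsmul_eq_zero
  have hpH : ¬ p ∣ Nat.card ↥H := by
    intro hdvd
    haveI : Fact p.Prime := ⟨hp⟩
    haveI : Fintype ↥H := Fintype.ofFinite _
    rw [Nat.card_eq_fintype_card] at hdvd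
    obtain ⟨x, hx⟩ := exists_prime_addOrderOf_dvd_card p hdvd
    have hx0 : m • x = 0 := Subtype.ext (by simpa using (hmemH _).mp x.2)
    have := addOrderOf_dvd_of_nsmul_eq_zero hx0
    rw [hx] at this
    exact hpm this
  have hunit : IsUnit ((Nat.card ↥H : ZMod (p ^ r))) := by
    rw [ZMod.isUnit_iff_coprime]
    exact Nat.Coprime.pow_right r (Nat.coprime_comm.mp (hp.coprime_iff_not_dvd.mpr hpH))
  -- the projection of the group ring onto functions on G ⧸ H
  let T : AddMonoidAlgebra (ZMod (p ^ r)) G →ₗ[ZMod (p ^ r)] ((G ⧸ H) → ZMod (p ^ r)) :=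
    { toFun := fun u q => ∑ g : G, if π g = q then u.coeff g else 0
      map_add' := by
        intro u v
        funext q
        simp only [Pi.add_apply, ← Finset.sum_add_distrib]
        refine Finset.sum_congr rfl fun g _ => ?_
        rw [AddMonoidAlgebra.coeff_add, Finsupp.add_apply]
        split <;> simp
      map_smul' := by
        intro c u
        funext q
        simp only [RingHom.id_apply, Pi.smul_apply, smul_eq_mul, Finset.mul_sum]
        refine Finset.sum_congr rfl fun g _ => ?_
        rw [AddMonoidAlgebra.coeff_smul, Finsupp.smul_apply, smul_eq_mul]
        split <;> simp }
  have hT : ∀ (u : AddMonoidAlgebra (ZMod (p ^ r)) G) (q : G ⧸ H),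
      T u q = ∑ g : G, if π g = q then u.coeff g else 0 := fun _ _ => rfl
  -- shifts of elements of C pair to zero with elements of C
  have hshift : ∀ u ∈ C, ∀ v ∈ C, ∀ h : G, ∑ g : G, u.coeff g * v.coeff (g + h) = 0 := by
    intro u hu v hv h
    have hv' : (AddMonoidAlgebra.single (-h) 1 : AddMonoidAlgebra (ZMod (p ^ r)) G) * v ∈ C :=
      C.mul_mem_left _ hv
    have hzero := (hC _).mp hv' u hu
    calc ∑ g : G, u.coeff g * v.coeff (g + h)
        = ∑ g : G, u.coeff g * ((AddMonoidAlgebra.single (-h) 1 : AddMonoidAlgebra (ZMod (p ^ r)) G) * v).coeff g := by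
          refine Finset.sum_congr rfl fun g _ => ?_
          rw [AddMonoidAlgebra.coeff_single_mul_apply, neg_neg, one_mul, add_comm]
      _ = 0 := hzero
  -- the key summation identity for T
  have hTs : ∀ (u : AddMonoidAlgebra (ZMod (p ^ r)) G) (s : (G ⧸ H) → ZMod (p ^ r)),
      ∑ q : G ⧸ H, T u q * s q = ∑ g : G, u.coeff g * s (π g) := by
    intro u s
    calc ∑ q : G ⧸ H, T u q * s q
        = ∑ q : G ⧸ H, ∑ g : G, (if π g = q then u.coeff g * s q else 0) := by
          simp only [hT, Finset.sum_mul, ite_mul, zero_mul]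
      _ = ∑ g : G, ∑ q : G ⧸ H, (if π g = q then u.coeff g * s q else 0) := Finset.sum_comm
      _ = ∑ g : G, u.coeff g * s (π g) := by
          refine Finset.sum_congr rfl fun g _ => ?_
          simp [Finset.sum_ite_eq]
  -- the projections of elements of C pair to zero
  have hTT : ∀ u ∈ C, ∀ v ∈ C, ∑ q : G ⧸ H, T u q * T v q = 0 := by
    intro u hu v hv
    calc ∑ q : G ⧸ H, T u q * T v q
        = ∑ g : G, u.coeff g * T v (π g) := hTs u (T v)
      _ = ∑ g : G, ∑ g' : G, if π g' = π g then u.coeff g * v.coeff g' else 0 := by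
          refine Finset.sum_congr rfl fun g _ => ?_
          rw [hT, Finset.mul_sum]
          exact Finset.sum_congr rfl fun g' _ => by rw [mul_ite, mul_zero]
      _ = ∑ g : G, ∑ h : G, if h ∈ H then u.coeff g * v.coeff (g + h) else 0 := by
          refine Finset.sum_congr rfl fun g _ => ?_
          refine (Fintype.sum_equiv (Equiv.addLeft g)
            (fun h => if h ∈ H then u.coeff g * v.coeff (g + h) else 0)
            (fun g' => if π g' = π g then u.coeff g * v.coeff g' else 0) fun h => ?_).symm
          have hcond : π (g + h) = π g ↔ h ∈ H := by
            rw [map_add]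
            exact (add_eq_left).trans (hπzero h)
          simp only [Equiv.coe_addLeft, hcond]
      _ = 0 := by
          rw [Finset.sum_comm]
          refine Finset.sum_eq_zero fun h _ => ?_
          by_cases hh : h ∈ H
          · simpa [hh] using hshift u hu v hv h
          · simp [hh]
  -- fibers of π have cardinality |H|
  have hfib : ∀ q : G ⧸ H, (Finset.univ.filter fun g : G => π g = q).card = Nat.card ↥H := by
    intro q
    obtain ⟨g₀, rfl⟩ := hπsurj q
    have hbij : (Finset.univ.filter fun g : G => π g = π g₀).card
        = (Finset.univ.filter fun h : G => h ∈ H).card := by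
      refine Finset.card_bij' (fun g _ => g - g₀) (fun h _ => g₀ + h) ?_ ?_ ?_ ?_
      · intro g hg
        simp only [Finset.mem_filter, Finset.mem_univ, true_and] at hg ⊢
        rw [← hπzero]
        rw [map_sub, hg, sub_self]
      · intro h hh
        simp only [Finset.mem_filter, Finset.mem_univ, true_and] at hh ⊢
        rw [map_add, (hπzero h).mpr hh, add_zero]
      · intro g _
        abel
      · intro h _
        abel
    rw [hbij]
    rw [Nat.card_eq_fintype_card]
    rw [Fintype.card_subtype]
  -- the image of C under T
  have hBdual : ∀ s : (G ⧸ H) → ZMod (p ^ r),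
      s ∈ Submodule.map T (C.restrictScalars (ZMod (p ^ r))) ↔ ∀ b ∈ Submodule.map T (C.restrictScalars (ZMod (p ^ r))), ∑ q : G ⧸ H, b q * s q = 0 := by
    intro s
    constructor
    · rintro ⟨v, hv, rfl⟩ b ⟨u, hu, rfl⟩
      exact hTT u hu v hv
    · intro hall
      -- pull back s to the group ring
      set v : AddMonoidAlgebra (ZMod (p ^ r)) G :=
        AddMonoidAlgebra.ofCoeff (Finsupp.equivFunOnFinite.symm (fun g => s (π g))) with hvdef
      have hvapp : ∀ g : G, v.coeff g = s (π g) := fun g => rfl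
      have hvC : v ∈ C := by
        rw [hC]
        intro u hu
        have h1 : ∑ g : G, u.coeff g * v.coeff g = ∑ q : G ⧸ H, T u q * s q := by
          rw [hTs]
          exact Finset.sum_congr rfl fun g _ => by rw [hvapp]
        rw [h1]
        exact hall (T u) ⟨u, hu, rfl⟩
      have hTv : T v = ((Nat.card ↥H : ZMod (p ^ r)) • s) := by
        funext q
        rw [hT]
        calc (∑ g : G, if π g = q then v.coeff g else 0)
            = ∑ g : G, if π g = q then s q else 0 := by
              refine Finset.sum_congr rfl fun g _ => ?_
              split
              · next hgq => rw [hvapp, hgq]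
              · rfl
          _ = ∑ g ∈ Finset.univ.filter (fun g : G => π g = q), s q := by
              rw [Finset.sum_filter]
          _ = (Finset.univ.filter fun g : G => π g = q).card • s q := Finset.sum_const _
          _ = (Nat.card ↥H : ZMod (p ^ r)) * s q := by
              rw [hfib, nsmul_eq_mul]
          _ = ((Nat.card ↥H : ZMod (p ^ r)) • s) q := rfl
      have hsmem : s ∈ Submodule.map T (C.restrictScalars (ZMod (p ^ r))) := by
        have h2 : (↑hunit.unit⁻¹ : ZMod (p ^ r)) • T v = s := by
          rw [hTv, smul_smul]
          rw [IsUnit.val_inv_mul]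
          rw [one_smul]
        rw [← h2]
        exact Submodule.smul_mem _ _ (Submodule.mem_map_of_mem hvC)
      exact hsmem
  -- apply the counting result
  have hcount := card_selfdual (p ^ r) (A := (Submodule.map T (C.restrictScalars (ZMod (p ^ r)))).toAddSubgroup)
    (fun v => by
      simpa only [Submodule.mem_toAddSubgroup] using hBdual v)
  set N := Nat.card ↥((Submodule.map T (C.restrictScalars (ZMod (p ^ r)))).toAddSubgroup) with hN
  have hNsq : N ^ 2 = p ^ (r * Fintype.card (G ⧸ H)) := by rw [hcount, ← pow_mul]
  have hNdvd : N ∣ p ^ (r * Fintype.card (G ⧸ H)) := by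
    rw [← hNsq]
    exact dvd_pow_self N two_ne_zero
  obtain ⟨c, hc, hNc⟩ := (Nat.dvd_prime_pow hp).mp hNdvd
  rw [hNc, ← pow_mul] at hNsq
  have h2c : c * 2 = r * Fintype.card (G ⧸ H) := Nat.pow_right_injective hp.two_le hNsq
  have heven : Even (r * Fintype.card (G ⧸ H)) := ⟨c, by omega⟩
  rcases Nat.even_mul.mp heven with hr2 | hq2
  · exact Or.inl hr2
  · haveI : Fact (Nat.Prime 2) := ⟨Nat.prime_two⟩
    obtain ⟨x, hx⟩ := exists_prime_addOrderOf_dvd_card 2 (even_iff_two_dvd.mp hq2)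
    have hxdvd : (2 : ℕ) ∣ p ^ a := by
      rw [← hx]
      exact addOrderOf_dvd_of_nsmul_eq_zero (hexp x)
    have hp2 : p = 2 := ((Nat.prime_dvd_prime_iff_eq Nat.prime_two hp).mp
      (Nat.prime_two.dvd_of_dvd_pow hxdvd)).symm
    refine Or.inr ⟨hp2, ?_⟩
    have hcardG : Nat.card G = Nat.card (G ⧸ H) * Nat.card ↥H :=
      AddSubgroup.card_eq_card_quotient_mul_card_addSubgroup H
    have hfin : Even (Nat.card G) := by
      rw [hcardG, Nat.card_eq_fintype_card]
      exact hq2.mul_right _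
    rwa [Nat.card_eq_fintype_card] at hfin
end

section
/- Let p = 2, r an odd positive integer, r′ = ⌈r/2⌉, and P a finite abelian 2-group containing an element x of order 2. Then the ideal U = 2^{r′}(ℤ/2^r ℤ)[P] + 2^{r′-1}(ℤ/2^r ℤ)[P](Y^x + 1) of the group ring (ℤ/2^r ℤ)[P] is Euclidean self-dual: U = U^⊥ with respect to the form ⟨∑ α_b Y^b, ∑ β_b Y^b⟩ = ∑_b α_b β_b. -/
lemma zmod_div_of_mul_eq_zero {n k m : ℕ} (h : k + m = n) (α : ZMod (2^n))
    (hα : (2:ZMod (2^n))^k * α = 0) : ∃ c, α = (2:ZMod (2^n))^m * c := by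
  haveI : NeZero (2^n) := ⟨(Nat.pow_pos two_pos (n := n)).ne'⟩
  have hval : ((2^k * α.val : ℕ) : ZMod (2^n)) = 0 := by
    push_cast
    rw [ZMod.natCast_val, ZMod.cast_id]
    exact hα
  rw [ZMod.natCast_eq_zero_iff] at hval
  have h2 : (2:ℕ)^k * 2^m ∣ 2^k * α.val := by rw [← pow_add, h]; exact hval
  have h3 : (2:ℕ)^m ∣ α.val := (mul_dvd_mul_iff_left (a := (2:ℕ)^k) (by positivity)).mp h2
  obtain ⟨c, hc⟩ := h3
  refine ⟨(c : ZMod (2^n)), ?_⟩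
  have h4 : ((α.val : ℕ) : ZMod (2^n)) = α := by rw [ZMod.natCast_val, ZMod.cast_id]
  rw [← h4, hc]
  push_cast
  ring

section coeffs
variable {R : Type*} [CommRing R] {P : Type*} [AddCommGroup P]

lemma two_pow_eq_single (k : ℕ) :
    ((2:AddMonoidAlgebra R P)^k) = AddMonoidAlgebra.single 0 ((2:R)^k) := by
  have h2 : (2:AddMonoidAlgebra R P) = AddMonoidAlgebra.single 0 (2:R) := by
    rw [show (2:AddMonoidAlgebra R P) = ((2:ℕ):AddMonoidAlgebra R P) by norm_cast,
      AddMonoidAlgebra.natCast_def]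
    norm_num
  rw [h2, AddMonoidAlgebra.single_pow, smul_zero]

lemma coeff_mul_two_pow (f : AddMonoidAlgebra R P) (k : ℕ) (g : P) :
    (f * (2:AddMonoidAlgebra R P)^k).coeff g = (2:R)^k * f.coeff g := by
  rw [two_pow_eq_single, AddMonoidAlgebra.coeff_mul_single_zero, mul_comm]

lemma coeff_mul_t {x : P} (hxx : x + x = 0) (f : AddMonoidAlgebra R P) (k : ℕ) (g : P) :
    (f * ((2:AddMonoidAlgebra R P)^k * (AddMonoidAlgebra.single x (1:R) + 1)) :
      AddMonoidAlgebra R P).coeff g = (2:R)^k * (f.coeff (g + x) + f.coeff g) := by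
  have hneg : -x = x := neg_eq_of_add_eq_zero_left hxx
  rw [← mul_assoc, mul_add, mul_one, AddMonoidAlgebra.coeff_add, Finsupp.add_apply, AddMonoidAlgebra.coeff_mul_single_apply,
    hneg, mul_one, coeff_mul_two_pow, coeff_mul_two_pow, mul_add]

end coeffs

/-- For odd `r`, `r′ = ⌈r/2⌉`, and a finite abelian 2-group `P` containing an
element `x` of order 2, the ideal
`U = 2^{r′}(ℤ/2^rℤ)[P] + 2^{r′-1}(ℤ/2^rℤ)[P](Y^x + 1)` of the group ring
`(ℤ/2^rℤ)[P]` is Euclidean self-dual. -/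
theorem euclidean_self_dual_ideal_construction
    (r r' : ℕ) (hr : 1 ≤ r) (hrodd : Odd r) (hr' : r' = (r + 1) / 2)
    (P : Type*) [AddCommGroup P] [Fintype P]
    (hP : ∃ a : ℕ, Fintype.card P = 2 ^ a)
    (x : P) (hx : addOrderOf x = 2) :
    ∀ v : AddMonoidAlgebra (ZMod (2 ^ r)) P,
      v ∈ Ideal.span {((2 : AddMonoidAlgebra (ZMod (2 ^ r)) P) ^ r'),
          (2 : AddMonoidAlgebra (ZMod (2 ^ r)) P) ^ (r' - 1) *
            (AddMonoidAlgebra.single x 1 + 1)} ↔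
      ∀ u ∈ Ideal.span {((2 : AddMonoidAlgebra (ZMod (2 ^ r)) P) ^ r'),
          (2 : AddMonoidAlgebra (ZMod (2 ^ r)) P) ^ (r' - 1) *
            (AddMonoidAlgebra.single x 1 + 1)},
        ∑ b : P, u.coeff b * v.coeff b = 0 := by
  intro v
  obtain ⟨m, hm⟩ := hrodd
  have hm' : r' = m + 1 := by omega
  -- group facts
  have hxx : x + x = 0 := by
    have := addOrderOf_nsmul_eq_zero x
    rw [hx, two_nsmul] at this
    exact this
  have hx0 : x ≠ 0 := by
    intro h
    rw [h, addOrderOf_zero] at hx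
    omega
  have hgx : ∀ g : P, g + x ≠ g := fun g h => hx0 (by simpa using h)
  have hgxx : ∀ g : P, g + x + x = g := fun g => by rw [add_assoc, hxx, add_zero]
  -- ring facts
  have h2r : (2:ZMod (2^r))^r = 0 := by
    have : ((2^r : ℕ) : ZMod (2^r)) = 0 := ZMod.natCast_self _
    push_cast at this
    exact this
  have e1 : (2:ZMod (2^r))^r' * (2:ZMod (2^r))^r' = 0 := by
    rw [← pow_add, show r' + r' = r + 1 by omega, pow_succ, h2r, zero_mul]
  have e2 : (2:ZMod (2^r))^r' * (2:ZMod (2^r))^(r'-1) = 0 := by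
    rw [← pow_add, show r' + (r'-1) = r by omega, h2r]
  have e3 : (2:ZMod (2^r))^(r'-1) * (2:ZMod (2^r))^(r'-1) = (2:ZMod (2^r))^(r-1) := by
    rw [← pow_add]; congr 1; omega
  have e4 : (2:ZMod (2^r))^(r-1) * 2 = 0 := by
    rw [show ((2:ZMod (2^r))^(r-1) * 2) = 2^r by rw [← pow_succ]; congr 1; omega, h2r]
  have e5 : (2:ZMod (2^r)) * (2:ZMod (2^r))^(r'-1) = (2:ZMod (2^r))^r' := by
    rw [← pow_succ']; congr 1; omega
  set s : AddMonoidAlgebra (ZMod (2^r)) P := (2:AddMonoidAlgebra (ZMod (2^r)) P)^r' with hs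
  set t : AddMonoidAlgebra (ZMod (2^r)) P :=
    (2:AddMonoidAlgebra (ZMod (2^r)) P)^(r'-1) * (AddMonoidAlgebra.single x 1 + 1) with ht
  constructor
  · intro hv u hu
    rw [Ideal.mem_span_pair] at hv hu
    obtain ⟨c, d, hcd⟩ := hv
    obtain ⟨a, b, hab⟩ := hu
    have hcoe : ∀ (a b : AddMonoidAlgebra (ZMod (2^r)) P) (g : P),
        (a * s + b * t).coeff g = (2:ZMod (2^r))^r' * a.coeff g
          + (2:ZMod (2^r))^(r'-1) * (b.coeff (g+x) + b.coeff g) := by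
      intro a b g
      rw [AddMonoidAlgebra.coeff_add, Finsupp.add_apply, hs, coeff_mul_two_pow, ht, coeff_mul_t hxx]
    have hu' : ∀ g, u.coeff g = (2:ZMod (2^r))^r' * a.coeff g
        + (2:ZMod (2^r))^(r'-1) * (b.coeff (g+x) + b.coeff g) := fun g => by rw [← hab, hcoe]
    have hv' : ∀ g, v.coeff g = (2:ZMod (2^r))^r' * c.coeff g
        + (2:ZMod (2^r))^(r'-1) * (d.coeff (g+x) + d.coeff g) := fun g => by rw [← hcd, hcoe]
    have key : ∀ g, u.coeff g * v.coeff g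
        = (2:ZMod (2^r))^(r-1) * ((b.coeff (g+x) + b.coeff g) * (d.coeff (g+x) + d.coeff g)) := by
      intro g
      rw [hu' g, hv' g]
      have expand : ((2:ZMod (2^r))^r' * a.coeff g + (2:ZMod (2^r))^(r'-1) * (b.coeff (g+x) + b.coeff g)) *
          ((2:ZMod (2^r))^r' * c.coeff g + (2:ZMod (2^r))^(r'-1) * (d.coeff (g+x) + d.coeff g))
          = ((2:ZMod (2^r))^r' * (2:ZMod (2^r))^r') * (a.coeff g * c.coeff g)
            + ((2:ZMod (2^r))^r' * (2:ZMod (2^r))^(r'-1))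
              * (a.coeff g * (d.coeff (g+x) + d.coeff g) + c.coeff g * (b.coeff (g+x) + b.coeff g))
            + ((2:ZMod (2^r))^(r'-1) * (2:ZMod (2^r))^(r'-1))
              * ((b.coeff (g+x) + b.coeff g) * (d.coeff (g+x) + d.coeff g)) := by ring
      rw [expand, e1, e2, e3, zero_mul, zero_mul, zero_add, zero_add]
    calc ∑ g : P, u.coeff g * v.coeff g
        = (2:ZMod (2^r))^(r-1) * ∑ g : P, (b.coeff (g+x) + b.coeff g) * (d.coeff (g+x) + d.coeff g) := by
          rw [Finset.mul_sum]; exact Finset.sum_congr rfl fun g _ => key g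
      _ = 0 := by
          have r1 : ∑ g : P, b.coeff (g+x) * d.coeff (g+x) = ∑ g : P, b.coeff g * d.coeff g :=
            Fintype.sum_equiv (Equiv.addRight x) _ _ (fun g => rfl)
          have r2 : ∑ g : P, b.coeff (g+x) * d.coeff g = ∑ g : P, b.coeff g * d.coeff (g+x) := by
            refine Fintype.sum_equiv (Equiv.addRight x) _ _ (fun g => ?_)
            simp only [Equiv.coe_addRight]
            rw [hgxx g]
          have split : ∑ g : P, (b.coeff (g+x) + b.coeff g) * (d.coeff (g+x) + d.coeff g)
              = 2 * (∑ g : P, b.coeff g * d.coeff g + ∑ g : P, b.coeff g * d.coeff (g+x)) := by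
            calc ∑ g : P, (b.coeff (g+x) + b.coeff g) * (d.coeff (g+x) + d.coeff g)
                = ∑ g : P, (b.coeff (g+x) * d.coeff (g+x) + b.coeff (g+x) * d.coeff g
                    + b.coeff g * d.coeff (g+x) + b.coeff g * d.coeff g) :=
                  Finset.sum_congr rfl fun g _ => by ring
              _ = ((∑ g : P, b.coeff (g+x) * d.coeff (g+x)) + ∑ g : P, b.coeff (g+x) * d.coeff g)
                    + (∑ g : P, b.coeff g * d.coeff (g+x)) + ∑ g : P, b.coeff g * d.coeff g := by
                  rw [← Finset.sum_add_distrib, ← Finset.sum_add_distrib,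
                    ← Finset.sum_add_distrib]
              _ = 2 * (∑ g : P, b.coeff g * d.coeff g + ∑ g : P, b.coeff g * d.coeff (g+x)) := by
                  rw [r1, r2]; ring
          rw [split, ← mul_assoc, e4, zero_mul]
  · intro H
    classical
    have hneg : -x = x := neg_eq_of_add_eq_zero_left hxx
    have step1 : ∀ g : P, ∃ c : ZMod (2^r), v.coeff g = (2:ZMod (2^r))^(r'-1) * c := by
      intro g
      have hmem : (AddMonoidAlgebra.single g 1 : AddMonoidAlgebra (ZMod (2^r)) P) * s ∈
          Ideal.span {s, t} :=
        Ideal.mul_mem_left _ _ (Ideal.subset_span (by simp))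
      have hp := H _ hmem
      have hsum : ∑ b : P,
          ((AddMonoidAlgebra.single g 1 : AddMonoidAlgebra (ZMod (2^r)) P) * s).coeff b * v.coeff b
          = (2:ZMod (2^r))^r' * v.coeff g := by
        rw [Finset.sum_congr rfl (fun b _ => by rw [hs, coeff_mul_two_pow])]
        rw [Finset.sum_congr rfl (fun b _ => mul_assoc _ _ _), ← Finset.mul_sum]
        congr 1
        rw [Finset.sum_congr rfl (fun b _ => by rw [AddMonoidAlgebra.coeff_single, Finsupp.single_apply, ite_mul,
          one_mul, zero_mul]), Finset.sum_ite_eq Finset.univ g (fun b => v.coeff b)]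
        simp
      rw [hsum] at hp
      exact zmod_div_of_mul_eq_zero (by omega) _ hp
    have step2 : ∀ g : P, ∃ d : ZMod (2^r), v.coeff g + v.coeff (g+x) = (2:ZMod (2^r))^r' * d := by
      intro g
      have hmem : (AddMonoidAlgebra.single g 1 : AddMonoidAlgebra (ZMod (2^r)) P) * t ∈
          Ideal.span {s, t} :=
        Ideal.mul_mem_left _ _ (Ideal.subset_span (by simp))
      have hp := H _ hmem
      have hsingle : ∀ bb : P,
          (AddMonoidAlgebra.single g (1:ZMod (2^r)) : AddMonoidAlgebra (ZMod (2^r)) P).coeff (bb+x)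
          = if g + x = bb then 1 else 0 := by
        intro bb
        rw [AddMonoidAlgebra.coeff_single, Finsupp.single_apply]
        by_cases h : g + x = bb
        · rw [if_pos (by rw [← h, hgxx]), if_pos h]
        · rw [if_neg (fun hc => h (by rw [hc, hgxx])), if_neg h]
      have hsum : ∑ b : P,
          ((AddMonoidAlgebra.single g 1 : AddMonoidAlgebra (ZMod (2^r)) P) * t).coeff b * v.coeff b
          = (2:ZMod (2^r))^(r'-1) * (v.coeff g + v.coeff (g+x)) := by
        rw [Finset.sum_congr rfl (fun b _ => by rw [ht, coeff_mul_t hxx])]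
        have expand : ∀ b : P, (2:ZMod (2^r))^(r'-1)
            * ((AddMonoidAlgebra.single g (1:ZMod (2^r)) : AddMonoidAlgebra (ZMod (2^r)) P).coeff (b+x)
              + (AddMonoidAlgebra.single g (1:ZMod (2^r)) : AddMonoidAlgebra (ZMod (2^r)) P).coeff b)
            * v.coeff b
            = (if g + x = b then (2:ZMod (2^r))^(r'-1) * v.coeff b else 0)
              + (if g = b then (2:ZMod (2^r))^(r'-1) * v.coeff b else 0) := by
          intro b
          rw [hsingle b, AddMonoidAlgebra.coeff_single, Finsupp.single_apply]
          by_cases h1 : g + x = b <;> by_cases h2 : g = b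
          · exact absurd (h1.trans h2.symm) (hgx g)
          · rw [if_pos h1, if_neg h2, if_pos h1, if_neg h2]; ring
          · rw [if_neg h1, if_pos h2, if_neg h1, if_pos h2]; ring
          · rw [if_neg h1, if_neg h2, if_neg h1, if_neg h2]; ring
        rw [Finset.sum_congr rfl (fun b _ => expand b), Finset.sum_add_distrib,
          Finset.sum_ite_eq Finset.univ (g+x) (fun b => (2:ZMod (2^r))^(r'-1) * v.coeff b),
          Finset.sum_ite_eq Finset.univ g (fun b => (2:ZMod (2^r))^(r'-1) * v.coeff b)]
        simp only [Finset.mem_univ, if_true]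
        ring
      rw [hsum] at hp
      exact zmod_div_of_mul_eq_zero (by omega) _ hp
    choose c hc using step1
    choose d hd using step2
    -- representatives for the pairs {g, g+x}
    let rep : P → P := fun g => (QuotientAddGroup.mk (s := AddSubgroup.zmultiples x) g).out
    have hrep_eq : ∀ g : P, rep (g + x) = rep g := by
      intro g
      have hq : (QuotientAddGroup.mk (s := AddSubgroup.zmultiples x) (g + x))
          = QuotientAddGroup.mk g := by
        rw [QuotientAddGroup.eq]
        have h1 : -(g + x) + g = x := by
          rw [neg_add_rev, add_assoc, neg_add_cancel, add_zero, hneg]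
        rw [h1]
        exact AddSubgroup.mem_zmultiples x
      simp only [rep, hq]
    have hrep_or : ∀ g : P, rep g = g ∨ rep g = g + x := by
      intro g
      have hout : QuotientAddGroup.mk (s := AddSubgroup.zmultiples x) (rep g)
          = QuotientAddGroup.mk g := Quotient.out_eq _
      rw [QuotientAddGroup.eq] at hout
      obtain ⟨n, hn⟩ := AddSubgroup.mem_zmultiples_iff.mp hout
      have hnx : n • x = 0 ∨ n • x = x := by
        rcases Int.even_or_odd n with ⟨q, hq⟩ | ⟨q, hq⟩
        · left
          rw [hq, show q + q = q * 2 by ring, mul_smul, two_zsmul, hxx, smul_zero]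
        · right
          rw [hq, add_smul, one_smul, show (2*q : ℤ) = q * 2 by ring,
            mul_smul, two_zsmul, hxx, smul_zero, zero_add]
      have hsub : g - rep g = n • x := by rw [hn, neg_add_eq_sub]
      rcases hnx with h | h
      · left
        have h2 : g - rep g = 0 := by rw [hsub, h]
        exact (sub_eq_zero.mp h2).symm
      · right
        have h2 : g - rep g = x := by rw [hsub, h]
        rw [sub_eq_iff_eq_add] at h2
        symm
        nth_rewrite 1 [h2]
        rw [add_comm x (rep g), add_assoc, hxx, add_zero]
    have hvrep : ∀ g : P, v.coeff (rep g) = v.coeff g ∨ v.coeff (rep g) = v.coeff (g + x) := by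
      intro g
      rcases hrep_or g with h | h
      · left; rw [h]
      · right; rw [h]
    -- define b
    let bfun : P → ZMod (2^r) := fun g => if rep g = g then c g else 0
    let b : AddMonoidAlgebra (ZMod (2^r)) P := AddMonoidAlgebra.ofCoeff (Finsupp.equivFunOnFinite.symm bfun)
    have hb : ∀ g : P, b.coeff g = bfun g := fun g => rfl
    have keyb : ∀ g : P, (2:ZMod (2^r))^(r'-1) * (b.coeff (g+x) + b.coeff g) = v.coeff (rep g) := by
      intro g
      rcases hrep_or g with h | h
      · have h1 : rep (g + x) ≠ g + x := by rw [hrep_eq g, h]; exact fun hcon => hgx g hcon.symm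
        rw [hb, hb]
        simp only [bfun, if_neg h1, if_pos h, zero_add]
        rw [← hc g, h]
      · have h0 : rep g ≠ g := by rw [h]; exact hgx g
        have h1 : rep (g + x) = g + x := by rw [hrep_eq g, h]
        rw [hb, hb]
        simp only [bfun, if_pos h1, if_neg h0, add_zero]
        rw [← hc (g+x), h]
    have key2 : ∀ g : P, ∃ e : ZMod (2^r), v.coeff g = (2:ZMod (2^r))^r' * e + v.coeff (rep g) := by
      intro g
      rcases hrep_or g with h | h
      · exact ⟨0, by rw [h, mul_zero, zero_add]⟩
      · refine ⟨d g - c (g + x), ?_⟩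
        rw [h]
        have h1 := hd g
        have h2 := hc (g + x)
        have h3 : (2:ZMod (2^r))^r' * c (g+x) = 2 * ((2:ZMod (2^r))^(r'-1) * c (g+x)) := by
          rw [← mul_assoc, e5]
        calc v.coeff g = ((2:ZMod (2^r))^r' * d g) - v.coeff (g+x) := by rw [← h1]; ring
          _ = (2:ZMod (2^r))^r' * (d g - c (g+x)) + v.coeff (g + x) := by
              rw [mul_sub, h3, h2]; ring
    choose e he using key2
    refine Ideal.mem_span_pair.mpr ⟨AddMonoidAlgebra.ofCoeff (Finsupp.equivFunOnFinite.symm e), b, ?_⟩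
    ext g
    rw [AddMonoidAlgebra.coeff_add, Finsupp.add_apply, hs, coeff_mul_two_pow, ht, coeff_mul_t hxx, keyb g]
    have ha : (AddMonoidAlgebra.ofCoeff (Finsupp.equivFunOnFinite.symm e) : AddMonoidAlgebra (ZMod (2^r)) P).coeff g = e g := rfl
    rw [ha]
    exact (he g).symm
end

section
/- Let p = 2, r odd, r′ = ⌈r/2⌉, and P a finite abelian 2-group of order 2^a (a ≥ 1) containing an element x of order 2. Then the ideal U = 2^{r′}(ℤ/2^r ℤ)[P] + 2^{r′-1}(ℤ/2^r ℤ)[P](Y^x + 1) has cardinality 2^{r·2^{a-1}}, i.e., |U|^2 = |(ℤ/2^r ℤ)[P]|. -/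
lemma card_torsion_zmod (n d e : ℕ) (hn : n ≠ 0) (h : d * e = n) :
    Nat.card {m : ZMod n // (d : ZMod n) * m = 0} = d := by
  haveI : NeZero n := ⟨hn⟩
  have hd : d ≠ 0 := by rintro rfl; exact hn (by simpa using h.symm)
  have he : e ≠ 0 := by rintro rfl; exact hn (by simpa using h.symm)
  set φ : ZMod n →+ ZMod n := AddMonoidHom.mulLeft (d : ZMod n) with hφ
  have happ : ∀ m : ZMod n, φ m = (d : ZMod n) * m := fun m => rfl
  have hrange : φ.range = AddSubgroup.zmultiples ((d : ℕ) : ZMod n) := by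
    ext y
    simp only [AddMonoidHom.mem_range, AddSubgroup.mem_zmultiples_iff]
    constructor
    · rintro ⟨m, rfl⟩
      obtain ⟨j, rfl⟩ := ZMod.intCast_surjective m
      exact ⟨j, by rw [zsmul_eq_mul, happ]; ring⟩
    · rintro ⟨j, rfl⟩
      exact ⟨(j : ZMod n), by rw [zsmul_eq_mul, happ]; ring⟩
  have h2 := AddSubgroup.card_eq_card_quotient_mul_card_addSubgroup φ.ker
  have h3 : Nat.card (ZMod n ⧸ φ.ker) = Nat.card φ.range :=
    Nat.card_congr (QuotientAddGroup.quotientKerEquivRange φ).toEquiv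
  have hgcd : n.gcd d = d := Nat.gcd_eq_right ⟨e, h.symm⟩
  have h4 : Nat.card φ.range = e := by
    rw [hrange, Nat.card_zmultiples, ZMod.addOrderOf_coe d hn, hgcd, ← h,
      Nat.mul_div_cancel_left _ (Nat.pos_of_ne_zero hd)]
  have h5 : Nat.card (ZMod n) = n := Nat.card_zmod n
  rw [h5, h3, h4] at h2
  have key : e * Nat.card φ.ker = e * d := by rw [← h2, ← h]; ring
  have h6 : Nat.card φ.ker = d := Nat.eq_of_mul_eq_mul_left (Nat.pos_of_ne_zero he) key
  have h7 : Nat.card {m : ZMod n // (d : ZMod n) * m = 0} = Nat.card φ.ker :=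
    Nat.card_congr (Equiv.subtypeEquivRight fun m => by rw [AddMonoidHom.mem_ker, happ])
  rw [h7, h6]

/-- For odd `r`, `r′ = ⌈r/2⌉`, and a finite abelian 2-group `P` of order `2^a`
(`a ≥ 1`) containing an element `x` of order 2, the ideal
`U = 2^{r′}(ℤ/2^rℤ)[P] + 2^{r′-1}(ℤ/2^rℤ)[P](Y^x + 1)` has cardinality
`2^{r·2^{a-1}}`. -/
theorem euclidean_self_dual_ideal_card
    (r r' : ℕ) (hr : 1 ≤ r) (hrodd : Odd r) (hr' : r' = (r + 1) / 2)
    (a : ℕ) (ha : 1 ≤ a)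
    (P : Type*) [AddCommGroup P] [Fintype P]
    (hP : Fintype.card P = 2 ^ a)
    (x : P) (hx : addOrderOf x = 2) :
    Nat.card (Ideal.span {((2 : AddMonoidAlgebra (ZMod (2 ^ r)) P) ^ r'),
        (2 : AddMonoidAlgebra (ZMod (2 ^ r)) P) ^ (r' - 1) *
          (AddMonoidAlgebra.single x 1 + 1)} :
        Ideal (AddMonoidAlgebra (ZMod (2 ^ r)) P)) = 2 ^ (r * 2 ^ (a - 1)) := by
  classical
  obtain ⟨t, ht⟩ := hrodd
  have hr'1 : r' = t + 1 := by omega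
  have hrt : r' - 1 = t := by omega
  set n : ℕ := 2 ^ r with hn
  have hn0 : n ≠ 0 := by positivity
  haveI : NeZero n := ⟨hn0⟩
  set R := AddMonoidAlgebra (ZMod n) P with hR
  set c1 : ZMod n := (2 : ZMod n) ^ (r' - 1) with hc1
  set c2 : ZMod n := (2 : ZMod n) ^ r' with hc2
  have hc21 : c2 = 2 * c1 := by rw [hc1, hc2, hrt, hr'1, pow_succ]; ring
  -- basic facts about x
  have hxx : x + x = 0 := by
    have h2 : (2 : ℕ) • x = 0 := hx ▸ addOrderOf_nsmul_eq_zero x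
    rwa [two_nsmul] at h2
  have hxne : x ≠ 0 := by
    intro h0
    rw [h0, addOrderOf_zero] at hx
    omega
  have hnegx : -x = x := neg_eq_of_add_eq_zero_left hxx
  have hpxx : ∀ p : P, p + x + x = p := by
    intro p; rw [add_assoc, hxx, add_zero]
  -- pointwise evaluation lemmas
  have hpow : ∀ (j : ℕ) (h : R) (p : P), ((2 : R) ^ j * h).coeff p = (2 : ZMod n) ^ j * h.coeff p := by
    intro j h p
    have h1 : (2 : R) ^ j = algebraMap (ZMod n) R ((2 : ZMod n) ^ j) := by
      rw [map_pow, map_ofNat]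
    rw [h1, ← Algebra.smul_def]
    exact Finsupp.smul_apply _ _ _
  set S : R := AddMonoidAlgebra.single x 1 + 1 with hS
  have hSval : ∀ (h : R) (p : P), (S * h).coeff p = h.coeff (p + x) + h.coeff p := by
    intro h p
    rw [hS, add_mul, one_mul, AddMonoidAlgebra.coeff_add, Finsupp.add_apply,
      AddMonoidAlgebra.coeff_single_mul_apply, one_mul,
      hnegx, add_comm x p]
  set A : R := (2 : R) ^ r' with hA
  set B : R := (2 : R) ^ (r' - 1) * S with hB
  have hEval : ∀ (g h : R) (p : P),
      (g * A + h * B).coeff p = c2 * g.coeff p + c1 * (h.coeff (p + x) + h.coeff p) := by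
    intro g h p
    have e1 : g * A = (2 : R) ^ r' * g := by rw [hA]; ring
    have e2 : h * B = (2 : R) ^ (r' - 1) * (S * h) := by rw [hB]; ring
    rw [e1, e2, AddMonoidAlgebra.coeff_add, Finsupp.add_apply, hpow, hpow, hSval]
  -- the membership predicate
  set Wpred : ZMod n → ZMod n → Prop :=
    fun α β => ∃ m k, α = c1 * m ∧ β = α + c2 * k with hWdef
  have hWsymm : ∀ {α β}, Wpred α β → Wpred β α := by
    rintro α β ⟨m, k, h1, h2⟩
    refine ⟨m + 2 * k, -k, ?_, ?_⟩
    · rw [h2, h1, hc21]; ring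
    · rw [h2, h1]; ring
  -- quotient by the subgroup generated by x
  set H : AddSubgroup P := AddSubgroup.zmultiples x with hH
  set Q := P ⧸ H with hQ
  have hzsmul : ∀ j : ℤ, j • x = 0 ∨ j • x = x := by
    intro j
    rcases Int.even_or_odd j with ⟨m, hm⟩ | ⟨m, hm⟩
    · left; rw [hm, add_zsmul, ← zsmul_add, hxx, zsmul_zero]
    · right; rw [hm, add_zsmul, one_zsmul, two_mul, add_zsmul, ← zsmul_add, hxx,
        zsmul_zero, zero_add]
  have hmem_H : ∀ y, y ∈ H ↔ y = 0 ∨ y = x := by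
    intro y; constructor
    · intro hy
      obtain ⟨j, hj⟩ := AddSubgroup.mem_zmultiples_iff.mp hy
      rcases hzsmul j with h0 | h1
      · left; rw [← hj]; exact h0
      · right; rw [← hj]; exact h1
    · rintro (rfl | hyx)
      · exact zero_mem H
      · rw [hyx]; exact AddSubgroup.mem_zmultiples x
  have hmk_add : ∀ p : P, (QuotientAddGroup.mk (p + x) : Q) = QuotientAddGroup.mk p := by
    intro p
    rw [QuotientAddGroup.eq]
    have e : -(p + x) + p = -x := by abel
    rw [e, hnegx]
    exact AddSubgroup.mem_zmultiples x
  set rep : P → P := fun p => Quotient.out (QuotientAddGroup.mk p : Q) with hrepdef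
  have hrep : ∀ p : P, Quotient.out (QuotientAddGroup.mk p : Q) = rep p := fun _ => rfl
  have hrep_add : ∀ p : P, rep (p + x) = rep p := by
    intro p
    rw [← hrep, ← hrep, hmk_add]
  have hout : ∀ p : P, rep p = p ∨ rep p = p + x := by
    intro p
    have h1 : (QuotientAddGroup.mk (rep p) : Q) = QuotientAddGroup.mk p := by
      rw [← hrep]; exact Quotient.out_eq _
    have h2 := QuotientAddGroup.eq.mp h1
    rcases (hmem_H _).mp h2 with h3 | h3
    · left; exact neg_add_eq_zero.mp h3
    · right
      have h5 : rep p + x = p := by rw [← h3]; abel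
      conv_rhs => rw [← h5]
      rw [add_assoc, hxx, add_zero]
  -- characterization of span membership
  have hmemspan : ∀ z : R, z ∈ Ideal.span {A, B} ↔ ∀ p : P, Wpred (z.coeff p) (z.coeff (p + x)) := by
    intro z
    rw [Ideal.mem_span_pair]
    constructor
    · rintro ⟨g, h, rfl⟩ p
      refine ⟨2 * g.coeff p + (h.coeff (p + x) + h.coeff p), g.coeff (p + x) - g.coeff p, ?_, ?_⟩
      · rw [hEval, hc21]; ring
      · rw [hEval, hEval, hpxx]; ring
    · intro hz
      choose m k hm hk using hz
      refine ⟨AddMonoidAlgebra.ofCoeff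
                (Finsupp.equivFunOnFinite.symm (fun p => if rep p = p then 0 else k (p + x))),
              AddMonoidAlgebra.ofCoeff
                (Finsupp.equivFunOnFinite.symm (fun p => if rep p = p then m p else 0)), ?_⟩
      apply AddMonoidAlgebra.ext
      apply Finsupp.ext
      intro p
      rw [hEval]
      simp only [AddMonoidAlgebra.coeff_ofCoeff, Finsupp.coe_equivFunOnFinite_symm]
      rcases hout p with hp | hp
      · have hne : rep (p + x) ≠ p + x := by
          rw [hrep_add, hp]
          exact fun hc => hxne (left_eq_add.mp hc)
        rw [if_pos hp, if_neg hne, if_pos hp, hm p]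
        ring
      · have hne : rep p ≠ p := by
          rw [hp]
          exact fun hc => hxne (add_eq_left.mp hc)
        have hrepx : rep (p + x) = p + x := by rw [hrep_add, hp]
        rw [if_neg hne, if_pos hrepx, if_neg hne]
        have h2 := hk (p + x)
        rw [hpxx] at h2
        rw [h2, hm (p + x)]
        ring
  -- the local model W
  set Wsub := {w : ZMod n × ZMod n // Wpred w.1 w.2} with hWsub
  -- bijection between the ideal and (Q → Wsub)
  set F : {z : R // z ∈ Ideal.span {A, B}} → (Q → Wsub) :=
    fun z q => ⟨(z.1.coeff (Quotient.out q), z.1.coeff (Quotient.out q + x)),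
      (hmemspan z.1).mp z.2 (Quotient.out q)⟩ with hF
  have hFbij : Function.Bijective F := by
    constructor
    · intro z₁ z₂ h12
      apply Subtype.ext
      apply AddMonoidAlgebra.ext
      apply Finsupp.ext
      intro p
      have h := congrFun h12 (QuotientAddGroup.mk p : Q)
      have h1 : z₁.1.coeff (rep p) = z₂.1.coeff (rep p) := by
        have := congrArg (fun w => w.1.1) h
        simpa [hF, hrep] using this
      have h2 : z₁.1.coeff (rep p + x) = z₂.1.coeff (rep p + x) := by
        have := congrArg (fun w => w.1.2) h
        simpa [hF, hrep] using this
      rcases hout p with hp | hp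
      · rw [hp] at h1; exact h1
      · rw [hp, add_assoc, hxx, add_zero] at h2; exact h2
    · intro w
      set f0 : P → ZMod n := fun p =>
        if rep p = p then (w (QuotientAddGroup.mk p : Q)).1.1
        else (w (QuotientAddGroup.mk p : Q)).1.2 with hf0
      have hf0mem : ∀ p, Wpred (f0 p) (f0 (p + x)) := by
        intro p
        rcases hout p with hp | hp
        · have hne : rep (p + x) ≠ p + x := by
            rw [hrep_add, hp]
            exact fun hc => hxne (left_eq_add.mp hc)
          simp only [hf0, if_pos hp, if_neg hne, hmk_add]
          exact (w (QuotientAddGroup.mk p : Q)).2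
        · have hne : rep p ≠ p := by
            rw [hp]
            exact fun hc => hxne (add_eq_left.mp hc)
          have hrepx : rep (p + x) = p + x := by rw [hrep_add, hp]
          simp only [hf0, if_neg hne, if_pos hrepx, hmk_add]
          exact hWsymm (w (QuotientAddGroup.mk p : Q)).2
      refine ⟨⟨AddMonoidAlgebra.ofCoeff (Finsupp.equivFunOnFinite.symm f0), (hmemspan _).mpr ?_⟩, ?_⟩
      · intro p
        simpa only [AddMonoidAlgebra.coeff_ofCoeff, Finsupp.coe_equivFunOnFinite_symm] using hf0mem p
      · funext q
        apply Subtype.ext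
        have hq : (QuotientAddGroup.mk (Quotient.out q) : Q) = q := Quotient.out_eq q
        have hrepq : rep (Quotient.out q) = Quotient.out q := by
          rw [← hrep, hq]
        have hne : rep (Quotient.out q + x) ≠ Quotient.out q + x := by
          rw [hrep_add, hrepq]
          exact fun hc => hxne (left_eq_add.mp hc)
        simp only [hF]
        apply Prod.ext
        · show (Finsupp.equivFunOnFinite.symm f0) (Quotient.out q) = (w q).1.1
          rw [Finsupp.coe_equivFunOnFinite_symm]
          simp only [hf0, if_pos hrepq, hq]
        · show (Finsupp.equivFunOnFinite.symm f0) (Quotient.out q + x) = (w q).1.2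
          rw [Finsupp.coe_equivFunOnFinite_symm]
          simp only [hf0, if_neg hne, hmk_add, hq]
  have e1 : Nat.card {z : R // z ∈ Ideal.span {A, B}} = Nat.card Wsub ^ Nat.card Q := by
    rw [Nat.card_congr (Equiv.ofBijective F hFbij), Nat.card_fun]
  -- cardinality of Q
  have hcardP : Nat.card P = 2 ^ a := by rw [Nat.card_eq_fintype_card, hP]
  have hcardH : Nat.card H = 2 := by rw [hH, Nat.card_zmultiples, hx]
  have hcardQ : Nat.card Q = 2 ^ (a - 1) := by
    have hlag := AddSubgroup.card_eq_card_quotient_mul_card_addSubgroup H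
    rw [hcardP, hcardH] at hlag
    have h2 : (2 : ℕ) ^ a = 2 ^ (a - 1) * 2 := by
      rw [← pow_succ]; congr 1; omega
    have hQc : Nat.card Q = Nat.card (P ⧸ H) := rfl
    rw [hQc]
    omega
  -- cardinality of Wsub
  have hd1 : c1 = ((2 ^ (r' - 1) : ℕ) : ZMod n) := by
    rw [hc1, Nat.cast_pow, Nat.cast_ofNat]
  have hd2 : c2 = ((2 ^ r' : ℕ) : ZMod n) := by
    rw [hc2, Nat.cast_pow, Nat.cast_ofNat]
  have hT1 : Nat.card {u : ZMod n // c1 * u = 0} = 2 ^ (r' - 1) := by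
    rw [hd1]
    exact card_torsion_zmod n (2 ^ (r' - 1)) (2 ^ r') hn0
      (by rw [← pow_add, hn]; congr 1; omega)
  have hT2 : Nat.card {u : ZMod n // c2 * u = 0} = 2 ^ r' := by
    rw [hd2]
    exact card_torsion_zmod n (2 ^ r') (2 ^ (r' - 1)) hn0
      (by rw [← pow_add, hn]; congr 1; omega)
  set L : (ZMod n × ZMod n) →+ (ZMod n × ZMod n) :=
    AddMonoidHom.mk' (fun z => (c1 * z.1, c1 * z.1 + c2 * z.2))
      (by intro z w; apply Prod.ext <;> simp <;> ring) with hL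
  have hLapp : ∀ z : ZMod n × ZMod n, L z = (c1 * z.1, c1 * z.1 + c2 * z.2) :=
    fun z => rfl
  have hLrange : ∀ w : ZMod n × ZMod n, w ∈ L.range ↔ Wpred w.1 w.2 := by
    intro w
    constructor
    · rintro ⟨z, rfl⟩
      exact ⟨z.1, z.2, rfl, rfl⟩
    · rintro ⟨m, k, h1, h2⟩
      refine ⟨(m, k), ?_⟩
      rw [hLapp]
      apply Prod.ext
      · exact h1.symm
      · rw [h2, h1]
  have e2 : Nat.card Wsub = 2 ^ r := by
    have hker : Nat.card L.ker = 2 ^ (r' - 1) * 2 ^ r' := by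
      rw [← hT1, ← hT2, ← Nat.card_prod]
      refine Nat.card_congr ((Equiv.subtypeEquivRight ?_).trans Equiv.subtypeProdEquivProd)
      intro z
      rw [AddMonoidHom.mem_ker, hLapp]
      constructor
      · intro hz
        have h1 : c1 * z.1 = 0 := congrArg Prod.fst hz
        have h2 : c1 * z.1 + c2 * z.2 = 0 := congrArg Prod.snd hz
        rw [h1, zero_add] at h2
        exact ⟨h1, h2⟩
      · rintro ⟨h1, h2⟩
        apply Prod.ext
        · simpa using h1
        · simp [h1, h2]
    have hM : Nat.card (ZMod n × ZMod n) = 2 ^ r * 2 ^ r := by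
      rw [Nat.card_prod, Nat.card_zmod, hn]
    have hlag := AddSubgroup.card_eq_card_quotient_mul_card_addSubgroup L.ker
    have hquot : Nat.card ((ZMod n × ZMod n) ⧸ L.ker) = Nat.card Wsub := by
      rw [Nat.card_congr (QuotientAddGroup.quotientKerEquivRange L).toEquiv]
      exact Nat.card_congr (Equiv.subtypeEquivRight fun w => hLrange w)
    rw [hM, hquot, hker] at hlag
    have hpowr : (2 : ℕ) ^ (r' - 1) * 2 ^ r' = 2 ^ r := by
      rw [← pow_add]; congr 1; omega
    rw [hpowr] at hlag
    exact Nat.eq_of_mul_eq_mul_right (by positivity) hlag.symm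
  -- conclusion
  rw [e1, e2, hcardQ, ← pow_mul]
end

section
/- Let p be a prime, r ≥ 2, s ≥ 1, and G a finite abelian group. If every ideal of the group ring (ℤ/p^r ℤ)[G] is principal, then gcd(p, |G|) = 1. -/
open AddMonoidAlgebra

private theorem pir_aux_not (p r : ℕ) (hp : p.Prime) (hr : 2 ≤ r) :
    ¬ IsPrincipalIdealRing (AddMonoidAlgebra (ZMod (p ^ r)) (ZMod p)) := by
  intro hPIR
  haveI : Fact p.Prime := ⟨hp⟩
  haveI h1 : Fact (1 < p ^ r) := ⟨one_lt_pow₀ hp.one_lt (by omega)⟩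
  haveI : NeZero (p ^ r) := ⟨by have := h1.out; omega⟩
  set x : AddMonoidAlgebra (ZMod (p ^ r)) (ZMod p) :=
    AddMonoidAlgebra.single (1 : ZMod p) (1 : ZMod (p ^ r)) with hx
  set ε : AddMonoidAlgebra (ZMod (p ^ r)) (ZMod p) →ₐ[ZMod (p ^ r)] ZMod (p ^ r) :=
    AddMonoidAlgebra.lift (ZMod (p ^ r)) (ZMod (p ^ r)) (ZMod p) 1 with hε
  have hεs : ∀ (a : ZMod p) (b : ZMod (p ^ r)), ε (AddMonoidAlgebra.single a b) = b := by
    intro a b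
    rw [hε, AddMonoidAlgebra.lift_single]
    simp
  have hεx : ε x = 1 := hεs 1 1
  have hεalg : ∀ s : ZMod (p ^ r),
      ε (algebraMap (ZMod (p ^ r)) (AddMonoidAlgebra (ZMod (p ^ r)) (ZMod p)) s) = s :=
    fun s => ε.commutes s
  -- (p : ZMod (p ^ r)) facts
  have hpR : (p : ZMod (p ^ r)) ≠ 0 := by
    intro h0
    have hdvd := (ZMod.natCast_eq_zero_iff p (p ^ r)).mp h0
    have := Nat.le_of_dvd hp.pos hdvd
    have hp1 : p ^ 1 = p := pow_one p
    have := Nat.pow_lt_pow_right hp.one_lt (show 1 < r by omega)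
    omega
  have hpRnu : ¬ IsUnit (p : ZMod (p ^ r)) := by
    intro hu
    have hz : (p : ZMod (p ^ r)) * (p : ZMod (p ^ r)) ^ (r - 1) = 0 := by
      have heq : (p : ZMod (p ^ r)) * (p : ZMod (p ^ r)) ^ (r - 1) = ((p ^ r : ℕ) : ZMod (p ^ r)) := by
        push_cast
        rw [← pow_succ']
        congr 1
        omega
      rw [heq, ZMod.natCast_self]
    obtain ⟨w, hw⟩ := hu
    have hz2 : (p : ZMod (p ^ r)) ^ (r - 1) = 0 := by
      have h3 : ((w⁻¹ : (ZMod (p ^ r))ˣ) : ZMod (p ^ r)) *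
          ((p : ZMod (p ^ r)) * (p : ZMod (p ^ r)) ^ (r - 1)) = 0 := by rw [hz, mul_zero]
      rw [← hw] at h3
      rw [← mul_assoc, Units.inv_mul, one_mul] at h3
      rw [← hw]
      exact h3
    rw [← Nat.cast_pow, ZMod.natCast_eq_zero_iff] at hz2
    have hle := Nat.le_of_dvd (Nat.pow_pos hp.pos) hz2
    have := Nat.pow_lt_pow_right hp.one_lt (show r - 1 < r by omega)
    omega
  -- x ^ p = 1
  have hxp : x ^ p = 1 := by
    rw [hx, AddMonoidAlgebra.single_pow]
    have h0 : (p : ℕ) • (1 : ZMod p) = 0 := by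
      simp [nsmul_eq_mul, ZMod.natCast_self]
    rw [h0, one_pow]
    rfl
  -- x - 1 ≠ 0
  have hx1ne : x - 1 ≠ 0 := by
    intro h
    have h2 := congrArg (fun f : AddMonoidAlgebra (ZMod (p ^ r)) (ZMod p) => f.coeff 1) h
    have e1 : (x - 1).coeff (1 : ZMod p) = 1 - (0 : ZMod (p ^ r)) := by
      rw [AddMonoidAlgebra.coeff_sub, Finsupp.sub_apply]
      congr 1
      · exact Finsupp.single_eq_same
      · show (AddMonoidAlgebra.single (0 : ZMod p) (1 : ZMod (p ^ r))).coeff 1 = 0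
        exact Finsupp.single_eq_of_ne one_ne_zero
    rw [e1] at h2
    simp only [sub_zero, AddMonoidAlgebra.coeff_zero, Finsupp.coe_zero, Pi.zero_apply] at h2
    exact one_ne_zero h2
  -- (p : B) ≠ 0
  have hpB : (p : AddMonoidAlgebra (ZMod (p ^ r)) (ZMod p)) ≠ 0 := by
    intro h
    have := congrArg ε h
    rw [map_natCast, map_zero] at this
    exact hpR this
  -- nilpotency
  have hpRr : ((p : ZMod (p ^ r))) ^ r = 0 := by
    rw [← Nat.cast_pow, ZMod.natCast_self]
  have hpBnil : IsNilpotent (p : AddMonoidAlgebra (ZMod (p ^ r)) (ZMod p)) := by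
    refine ⟨r, ?_⟩
    rw [← Nat.cast_pow]
    rw [show ((p ^ r : ℕ) : AddMonoidAlgebra (ZMod (p ^ r)) (ZMod p))
      = algebraMap (ZMod (p ^ r)) (AddMonoidAlgebra (ZMod (p ^ r)) (ZMod p)) ((p ^ r : ℕ) : ZMod (p ^ r))
      from (map_natCast _ _).symm]
    rw [Nat.cast_pow, hpRr, map_zero]
  have hx1nil : IsNilpotent (x - 1) := by
    obtain ⟨c0, hc0⟩ := (Commute.all x (-1 : AddMonoidAlgebra (ZMod (p ^ r)) (ZMod p))).exists_add_pow_prime_eq hp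
    obtain ⟨c, hc⟩ : ∃ c, (x + -1 : AddMonoidAlgebra (ZMod (p ^ r)) (ZMod p)) ^ p
        = x ^ p + (-1 : AddMonoidAlgebra (ZMod (p ^ r)) (ZMod p)) ^ p + p * c :=
      ⟨x * -1 * c0, by rw [hc0]; ring⟩
    have hsub : (x - 1) ^ p = x ^ p + (-1 : AddMonoidAlgebra (ZMod (p ^ r)) (ZMod p)) ^ p + p * c := by
      rw [sub_eq_add_neg]; exact hc
    have hd : ∃ d, (x - 1) ^ p = (p : AddMonoidAlgebra (ZMod (p ^ r)) (ZMod p)) * d := by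
      rcases hp.eq_two_or_odd' with h2 | hodd
      · have heven : Even p := ⟨1, by omega⟩
        have hm1 : (-1 : AddMonoidAlgebra (ZMod (p ^ r)) (ZMod p)) ^ p = 1 := heven.neg_one_pow
        have hp2 : (p : AddMonoidAlgebra (ZMod (p ^ r)) (ZMod p)) = 2 := by
          have := congrArg (fun n : ℕ => (n : AddMonoidAlgebra (ZMod (p ^ r)) (ZMod p))) h2
          simpa using this
        refine ⟨1 + c, ?_⟩
        rw [hsub, hxp, hm1, hp2]
        ring
      · refine ⟨c, ?_⟩
        rw [hsub, hxp, hodd.neg_one_pow]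
        ring
    obtain ⟨d, hd⟩ := hd
    refine ⟨p * r, ?_⟩
    rw [pow_mul, hd, mul_pow, ← Nat.cast_pow]
    rw [show ((p ^ r : ℕ) : AddMonoidAlgebra (ZMod (p ^ r)) (ZMod p))
      = algebraMap (ZMod (p ^ r)) (AddMonoidAlgebra (ZMod (p ^ r)) (ZMod p)) ((p ^ r : ℕ) : ZMod (p ^ r))
      from (map_natCast _ _).symm]
    rw [Nat.cast_pow, hpRr, map_zero, zero_mul]
  -- the maximal ideal
  set m : Ideal (AddMonoidAlgebra (ZMod (p ^ r)) (ZMod p)) :=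
    Ideal.span {(p : AddMonoidAlgebra (ZMod (p ^ r)) (ZMod p)), x - 1} with hm
  have hpm : (p : AddMonoidAlgebra (ZMod (p ^ r)) (ZMod p)) ∈ m := Ideal.subset_span (by simp)
  have hx1m : (x - 1) ∈ m := Ideal.subset_span (by simp)
  -- θ
  have hpdvd : p ∣ p ^ r := dvd_pow_self p (by omega)
  set θ : AddMonoidAlgebra (ZMod (p ^ r)) (ZMod p) →+* ZMod p :=
    (ZMod.castHom hpdvd (ZMod p)).comp (ε : AddMonoidAlgebra (ZMod (p ^ r)) (ZMod p) →+* ZMod (p ^ r)) with hθ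
  have hθsurj : Function.Surjective θ := by
    intro y
    refine ⟨algebraMap (ZMod (p ^ r)) (AddMonoidAlgebra (ZMod (p ^ r)) (ZMod p)) ((y.val : ℕ) : ZMod (p ^ r)), ?_⟩
    rw [hθ, RingHom.comp_apply]
    show (ZMod.castHom hpdvd (ZMod p)) (ε (algebraMap _ _ ((y.val : ℕ) : ZMod (p ^ r)))) = y
    rw [hεalg, map_natCast]
    exact ZMod.natCast_rightInverse y
  have hθker : RingHom.ker θ = m := by
    apply le_antisymm
    · intro b hb
      have key : ∀ b : AddMonoidAlgebra (ZMod (p ^ r)) (ZMod p),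
          b - algebraMap (ZMod (p ^ r)) _ (ε b) ∈ Ideal.span ({x - 1} : Set (AddMonoidAlgebra (ZMod (p ^ r)) (ZMod p))) := by
        intro b
        induction b using AddMonoidAlgebra.induction_on with
        | of a =>
          have hof : (AddMonoidAlgebra.of (ZMod (p ^ r)) (ZMod p) (Multiplicative.ofAdd a))
              = AddMonoidAlgebra.single a (1 : ZMod (p ^ r)) := rfl
          rw [hof, hεs, Ideal.mem_span_singleton]
          have hxa : x ^ (a.val) = AddMonoidAlgebra.single a (1 : ZMod (p ^ r)) := by
            rw [hx, AddMonoidAlgebra.single_pow, one_pow]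
            congr 1
            rw [nsmul_eq_mul, mul_one]
            exact ZMod.natCast_rightInverse a
          have halg1 : algebraMap (ZMod (p ^ r)) (AddMonoidAlgebra (ZMod (p ^ r)) (ZMod p)) 1 = 1 :=
            map_one _
          rw [halg1, ← hxa]
          simpa using sub_dvd_pow_sub_pow x 1 a.val
        | add f g hf hg =>
          have hsplit : (f + g) - algebraMap (ZMod (p ^ r)) _ (ε (f + g))
              = (f - algebraMap (ZMod (p ^ r)) _ (ε f)) + (g - algebraMap (ZMod (p ^ r)) _ (ε g)) := by
            rw [map_add, map_add]
            ring
          rw [hsplit]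
          exact Ideal.add_mem _ hf hg
        | smul s f hf =>
          have hsplit : (s • f) - algebraMap (ZMod (p ^ r)) _ (ε (s • f))
              = algebraMap (ZMod (p ^ r)) _ s * (f - algebraMap (ZMod (p ^ r)) _ (ε f)) := by
            rw [map_smul, Algebra.smul_def, smul_eq_mul, map_mul]
            ring
          rw [hsplit]
          exact Ideal.mul_mem_left _ _ hf
      have hεb : algebraMap (ZMod (p ^ r)) (AddMonoidAlgebra (ZMod (p ^ r)) (ZMod p)) (ε b) ∈ m := by
        have h0 : (((ε b).val : ℕ) : ZMod p) = 0 := by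
          have hθb : θ b = 0 := hb
          rw [hθ, RingHom.comp_apply] at hθb
          rwa [ZMod.castHom_apply, ← ZMod.natCast_val] at hθb
        rw [ZMod.natCast_eq_zero_iff] at h0
        obtain ⟨t, ht⟩ := h0
        have hεbt : ε b = (p : ZMod (p ^ r)) * (t : ZMod (p ^ r)) := by
          conv_lhs => rw [← ZMod.natCast_rightInverse (ε b), ht]
          push_cast
          ring
        rw [hεbt, map_mul, map_natCast]
        exact Ideal.mul_mem_right _ _ hpm
      have hfin := Ideal.add_mem m (Ideal.span_mono
        (by simp : ({x - 1} : Set (AddMonoidAlgebra (ZMod (p ^ r)) (ZMod p))) ⊆ {(p : AddMonoidAlgebra (ZMod (p ^ r)) (ZMod p)), x - 1}) (key b)) hεb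
      simpa using hfin
    · rw [hm, Ideal.span_le]
      rintro b hb
      simp only [Set.mem_insert_iff, Set.mem_singleton_iff] at hb
      rcases hb with rfl | rfl
      · show θ (p : AddMonoidAlgebra (ZMod (p ^ r)) (ZMod p)) = 0
        rw [map_natCast, ZMod.natCast_self]
      · show θ (x - 1) = 0
        rw [map_sub, map_one, hθ, RingHom.comp_apply]
        show (ZMod.castHom hpdvd (ZMod p)) (ε x) - 1 = 0
        rw [hεx, map_one, sub_self]
  have hmmax : m.IsMaximal := hθker ▸ RingHom.ker_isMaximal_of_surjective θ hθsurj
  -- elements of m are nilpotent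
  have hmnil : ∀ b ∈ m, IsNilpotent b := by
    intro b hb
    have hle : m ≤ nilradical (AddMonoidAlgebra (ZMod (p ^ r)) (ZMod p)) := by
      rw [hm, Ideal.span_le]
      rintro c hc
      simp only [Set.mem_insert_iff, Set.mem_singleton_iff] at hc
      rcases hc with rfl | rfl
      · exact hpBnil
      · exact hx1nil
    exact mem_nilradical.mp (hle hb)
  -- units outside m
  have hunit : ∀ u, u ∉ m → IsUnit u := by
    intro u hu
    obtain ⟨y, i, him, hyi⟩ := hmmax.exists_inv hu
    have hyu : IsUnit (y * u) := by
      have hyeq : y * u = 1 - i := by linear_combination hyi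
      rw [hyeq]
      exact IsNilpotent.isUnit_one_sub (hmnil i him)
    exact isUnit_of_mul_isUnit_right hyu
  -- principality
  obtain ⟨f, hf0⟩ := (hPIR.principal m)
  have hf : m = Ideal.span ({f} : Set (AddMonoidAlgebra (ZMod (p ^ r)) (ZMod p))) := hf0
  have hfm : f ∈ m := by rw [hf]; exact Ideal.mem_span_singleton_self f
  obtain ⟨N, hN⟩ := hmnil f hfm
  -- max power decomposition
  have decomp : ∀ b : AddMonoidAlgebra (ZMod (p ^ r)) (ZMod p), b ≠ 0 → b ∈ m →
      ∃ (j : ℕ) (w : AddMonoidAlgebra (ZMod (p ^ r)) (ZMod p)), 1 ≤ j ∧ b = f ^ j * w ∧ w ∉ m := by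
    intro b hb0 hbm
    have hnot : ∃ k, b ∉ Ideal.span ({f ^ k} : Set (AddMonoidAlgebra (ZMod (p ^ r)) (ZMod p))) := by
      refine ⟨N, ?_⟩
      rw [hN]
      rw [Ideal.span_singleton_eq_bot.mpr rfl]
      simpa using hb0
    classical
    set k₀ := Nat.find hnot with hk₀
    have hk₀spec : b ∉ Ideal.span ({f ^ k₀} : Set (AddMonoidAlgebra (ZMod (p ^ r)) (ZMod p))) :=
      Nat.find_spec hnot
    have hk₀1 : b ∈ Ideal.span ({f ^ 1} : Set (AddMonoidAlgebra (ZMod (p ^ r)) (ZMod p))) := by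
      rw [pow_one, ← hf]; exact hbm
    have hk₀0 : b ∈ Ideal.span ({f ^ 0} : Set (AddMonoidAlgebra (ZMod (p ^ r)) (ZMod p))) := by
      rw [pow_zero, Ideal.span_singleton_one]
      exact Submodule.mem_top
    have hk₀pos : 2 ≤ k₀ := by
      rcases Nat.lt_or_ge k₀ 2 with hcon | hge
      · interval_cases k₀
        · exact absurd hk₀0 hk₀spec
        · exact absurd hk₀1 hk₀spec
      · exact hge
    have hj : b ∈ Ideal.span ({f ^ (k₀ - 1)} : Set (AddMonoidAlgebra (ZMod (p ^ r)) (ZMod p))) := by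
      by_contra hcon
      have := Nat.find_min' hnot hcon
      omega
    rw [Ideal.mem_span_singleton] at hj
    obtain ⟨w, hw⟩ := hj
    refine ⟨k₀ - 1, w, by omega, hw, ?_⟩
    intro hwm
    rw [hf, Ideal.mem_span_singleton] at hwm
    obtain ⟨w', hw'⟩ := hwm
    apply hk₀spec
    rw [Ideal.mem_span_singleton]
    refine ⟨w', ?_⟩
    rw [hw, hw']
    conv_rhs => rw [show k₀ = (k₀ - 1) + 1 from by omega]
    ring
  obtain ⟨j, u, hj1, hu, hum⟩ := decomp (x - 1) hx1ne hx1m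
  obtain ⟨i, v, hi1, hv, hvm⟩ := decomp (p : AddMonoidAlgebra (ZMod (p ^ r)) (ZMod p)) hpB hpm
  have huu : IsUnit u := hunit u hum
  have hvu : IsUnit v := hunit v hvm
  rcases le_or_gt i j with hij | hij
  · -- x - 1 ∈ (p)
    obtain ⟨vinv, hvinv⟩ := hvu.exists_left_inv
    have hfi : f ^ i = (p : AddMonoidAlgebra (ZMod (p ^ r)) (ZMod p)) * vinv := by
      rw [hv]
      rw [show f ^ i * v * vinv = f ^ i * (vinv * v) from by ring, hvinv, mul_one]
    have hxeq : x - 1 = (p : AddMonoidAlgebra (ZMod (p ^ r)) (ZMod p)) * (vinv * f ^ (j - i) * u) := by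
      have hsplitpow : f ^ j = f ^ i * f ^ (j - i) := by
        rw [← pow_add]
        congr 1
        omega
      rw [hu, hsplitpow, hfi]
      ring
    set c := vinv * f ^ (j - i) * u with hc
    have h2 := congrArg (fun g : AddMonoidAlgebra (ZMod (p ^ r)) (ZMod p) => g.coeff 1) hxeq
    have e1 : (x - 1).coeff (1 : ZMod p) = 1 - (0 : ZMod (p ^ r)) := by
      rw [AddMonoidAlgebra.coeff_sub, Finsupp.sub_apply]
      congr 1
      · exact Finsupp.single_eq_same
      · show (AddMonoidAlgebra.single (0 : ZMod p) (1 : ZMod (p ^ r))).coeff 1 = 0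
        exact Finsupp.single_eq_of_ne one_ne_zero
    have e2 : ((p : AddMonoidAlgebra (ZMod (p ^ r)) (ZMod p)) * c).coeff 1 = (p : ZMod (p ^ r)) * c.coeff 1 := by
      have hcast : (p : AddMonoidAlgebra (ZMod (p ^ r)) (ZMod p))
          = AddMonoidAlgebra.single (0 : ZMod p) (p : ZMod (p ^ r)) := by
        simp [AddMonoidAlgebra.natCast_def]
      rw [hcast]
      exact AddMonoidAlgebra.coeff_single_zero_mul c _ 1
    rw [e1] at h2
    rw [e2] at h2
    rw [sub_zero] at h2
    exact hpRnu (IsUnit.of_mul_eq_one (c.coeff 1) h2.symm)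
  · -- p ∈ (x - 1)
    obtain ⟨uinv, huinv⟩ := huu.exists_left_inv
    have hfj : f ^ j = (x - 1) * uinv := by
      rw [hu]
      rw [show f ^ j * u * uinv = f ^ j * (uinv * u) from by ring, huinv, mul_one]
    have hcontr : (p : AddMonoidAlgebra (ZMod (p ^ r)) (ZMod p))
        = (x - 1) * (uinv * f ^ (i - j) * v) := by
      have hsplitpow : f ^ i = f ^ j * f ^ (i - j) := by
        rw [← pow_add]
        congr 1
        omega
      rw [hv, hsplitpow, hfj]
      ring
    have hfin := congrArg ε hcontr
    rw [map_natCast, map_mul, map_sub, map_one, hεx, sub_self, zero_mul] at hfin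
    exact hpR hfin

open DirectSum

private theorem reduction (p r : ℕ) (hp : p.Prime) (hr : 2 ≤ r)
    (G : Type*) [AddCommGroup G] [Fintype G]
    (hdvd : p ∣ Fintype.card G)
    (hPIR : IsPrincipalIdealRing (AddMonoidAlgebra (ZMod (p ^ r)) G)) : False := by
  haveI : Fact p.Prime := ⟨hp⟩
  classical
  obtain ⟨ι, hι, n, hn, ⟨e⟩⟩ := AddCommGroup.equiv_directSum_zmod_of_finite' G
  haveI : ∀ i, NeZero (n i) := fun i => ⟨by have := hn i; omega⟩
  -- card
  have hcard : Nat.card G = ∏ i, n i := by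
    have h1 : Nat.card G = Nat.card (⨁ i, ZMod (n i)) := Nat.card_congr e.toEquiv
    have h2 : Nat.card (⨁ i, ZMod (n i)) = Nat.card (∀ i, ZMod (n i)) :=
      Nat.card_congr (DFinsupp.equivFunOnFintype)
    rw [h1, h2, Nat.card_pi]
    congr 1
    funext i
    exact Nat.card_zmod (n i)
  have hpprod : p ∣ ∏ i, n i := by
    rw [← hcard, Nat.card_eq_fintype_card]
    exact hdvd
  obtain ⟨i, _, hi⟩ := (hp.prime.dvd_finset_prod_iff n).mp hpprod
  -- the surjection G →+ ZMod p
  let φ : G →+ ZMod p :=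
    ((ZMod.castHom hi (ZMod p)).toAddMonoidHom.comp
      ((DFinsupp.evalAddMonoidHom i : (⨁ j, ZMod (n j)) →+ ZMod (n i)))).comp e.toAddMonoidHom
  have hφ : Function.Surjective φ := by
    intro z
    refine ⟨e.symm (DirectSum.of (fun j => ZMod (n j)) i ((z.val : ℕ) : ZMod (n i))), ?_⟩
    show (ZMod.castHom hi (ZMod p))
      ((e (e.symm (DirectSum.of (fun j => ZMod (n j)) i ((z.val : ℕ) : ZMod (n i))))) i) = z
    rw [e.apply_symm_apply]
    rw [DirectSum.of_eq_same]
    rw [map_natCast]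
    exact ZMod.natCast_rightInverse z
  -- surjective ring hom on group rings
  let Φ := AddMonoidAlgebra.mapDomainRingHom (ZMod (p ^ r)) φ
  have hΦ : Function.Surjective Φ := by
    intro y
    refine ⟨AddMonoidAlgebra.mapDomain (Function.surjInv hφ) y, ?_⟩
    show AddMonoidAlgebra.mapDomain φ (AddMonoidAlgebra.mapDomain (Function.surjInv hφ) y) = y
    apply AddMonoidAlgebra.coeff_injective
    show Finsupp.mapDomain φ (Finsupp.mapDomain (Function.surjInv hφ) y.coeff) = y.coeff
    rw [← Finsupp.mapDomain_comp]
    rw [show (φ : G → ZMod p) ∘ (Function.surjInv hφ) = id from funext fun z =>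
      Function.surjInv_eq hφ z]
    exact Finsupp.mapDomain_id
  exact pir_aux_not p r hp hr (IsPrincipalIdealRing.of_surjective Φ hΦ)

/-- For `r ≥ 2`, if every ideal of the group ring `(ℤ/p^rℤ)[G]` of a finite
abelian group `G` is principal, then `gcd(p, |G|) = 1`. -/
theorem principal_ideal_group_ring_necessary
    (p r : ℕ) (hp : p.Prime) (hr : 2 ≤ r)
    (G : Type*) [AddCommGroup G] [Fintype G]
    (hPIR : IsPrincipalIdealRing (AddMonoidAlgebra (ZMod (p ^ r)) G)) :
    Nat.gcd p (Fintype.card G) = 1 := by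
  by_contra h
  have hdvd : p ∣ Fintype.card G := by
    by_contra hnd
    exact h ((Nat.Prime.coprime_iff_not_dvd hp).mpr hnd)
  exact reduction p r hp hr G hdvd hPIR
end

section
/- Let p be a prime, r a positive even integer, s ≥ 1, and A a finite abelian group with gcd(p,|A|) = 1 and exponent M. If (M, p^s) is good (i.e., M divides p^{st} + 1 for some t ≥ 1), then the only Euclidean self-dual ideal of GR(p^r,s)[A] is p^{r/2}·GR(p^r,s)[A]. -/
section ChainRing
variable {R : Type*} [CommRing R] (p r : ℕ)

lemma aux_ppow_r (hchar : CharP R (p ^ r)) : (p : R) ^ r = 0 := by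
  have := CharP.cast_eq_zero R (p ^ r)
  rwa [Nat.cast_pow] at this

lemma aux_ppow_ne (hp : p.Prime) (hchar : CharP R (p ^ r)) {i : ℕ} (hi : i < r) :
    (p : R) ^ i ≠ 0 := by
  intro h
  rw [← Nat.cast_pow, CharP.cast_eq_zero_iff R (p ^ r)] at h
  have := (Nat.pow_dvd_pow_iff_le_right hp.one_lt).mp h
  omega

/-- Key chain-ring fact: annihilator of `p^i` is contained in `(p^(r-i))`. -/
lemma aux_ann (hp : p.Prime) [IsLocalRing R] (hchar : CharP R (p ^ r))
    (hmax : IsLocalRing.maximalIdeal R = Ideal.span {(p : R)})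
    {i : ℕ} (hi : i ≤ r) {x : R} (hx : x * (p : R) ^ i = 0) :
    (p : R) ^ (r - i) ∣ x := by
  suffices h : ∀ n ≤ r - i, (p : R) ^ n ∣ x from h _ le_rfl
  intro n hn
  induction n with
  | zero => simpa using one_dvd x
  | succ m ih =>
    obtain ⟨y, hy⟩ := ih (by omega)
    have h0 : (p : R) ^ (m + i) * y = 0 := by
      rw [pow_add]
      calc (p:R) ^ m * (p:R) ^ i * y = ((p:R) ^ m * y) * (p:R) ^ i := by ring
        _ = x * (p:R) ^ i := by rw [← hy]
        _ = 0 := hx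
    have hyunit : ¬ IsUnit y := by
      intro hy'
      rw [IsUnit.mul_left_eq_zero hy'] at h0
      exact aux_ppow_ne p r hp hchar (show m + i < r by omega) h0
    have hmem : y ∈ IsLocalRing.maximalIdeal R := (IsLocalRing.mem_maximalIdeal y).mpr hyunit
    rw [hmax, Ideal.mem_span_singleton] at hmem
    obtain ⟨z, hz⟩ := hmem
    exact ⟨z, by rw [hy, hz, pow_succ]; ring⟩

end ChainRing

lemma aux_card_hom {G H : Type*} [AddGroup G] [AddGroup H] (f : G →+ H) :
    Nat.card G = Nat.card f.range * Nat.card f.ker := by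
  rw [AddSubgroup.card_eq_card_quotient_mul_card_addSubgroup f.ker]
  congr 1
  exact Nat.card_congr (QuotientAddGroup.quotientKerEquivRange f).toEquiv

section Card
variable {R : Type*} [CommRing R] [IsLocalRing R] (p r s : ℕ)

/-- cardinality of the residue field. -/
lemma aux_card_res [Fintype R] (hp : p.Prime) (hr : 1 ≤ r) (hchar : CharP R (p ^ r))
    (hcard : Fintype.card R = p ^ (r * s))
    (hmax : IsLocalRing.maximalIdeal R = Ideal.span {(p : R)}) :
    Nat.card (R ⧸ Ideal.span {(p : R)}) = p ^ s := by
  set c : ℕ → ℕ := fun i => Nat.card (Ideal.span {(p : R) ^ i} : Ideal R) with hc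
  -- step relation
  have step : ∀ i, i + 1 ≤ r → c i = c (i + 1) * c (r - 1) := by
    intro i hir
    set f : (Ideal.span {(p : R) ^ i} : Ideal R) →+ R :=
      AddMonoidHom.mk' (fun x => (p : R) * x.1) (by intro a b; push_cast; ring) with hf
    have hrange : f.range = (Ideal.span {(p : R) ^ (i + 1)} : Ideal R).toAddSubgroup := by
      ext x
      simp only [AddMonoidHom.mem_range, Submodule.mem_toAddSubgroup, Ideal.mem_span_singleton, hf,
        AddMonoidHom.mk'_apply]
      constructor
      · rintro ⟨⟨y, hy⟩, rfl⟩
        rw [Ideal.mem_span_singleton] at hy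
        obtain ⟨z, rfl⟩ := hy
        exact ⟨z, by rw [pow_succ]; ring⟩
      · rintro ⟨z, rfl⟩
        refine ⟨⟨(p : R) ^ i * z, Ideal.mem_span_singleton.mpr ⟨z, rfl⟩⟩, ?_⟩
        rw [pow_succ]; ring
    have hker : Nat.card f.ker = c (r - 1) := by
      refine Nat.card_congr ?_
      refine ⟨fun x => ⟨x.1.1, ?_⟩, fun y => ⟨⟨y.1, ?_⟩, ?_⟩, ?_, ?_⟩
      · have hx0 : (p : R) * x.1.1 = 0 := x.2
        rw [Ideal.mem_span_singleton]
        exact aux_ann p r hp hchar hmax (show 1 ≤ r from hr)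
          (x := x.1.1) (by rw [pow_one, mul_comm]; exact hx0)
      · obtain ⟨z, hz⟩ := Ideal.mem_span_singleton.mp y.2
        exact Ideal.mem_span_singleton.mpr (dvd_trans (pow_dvd_pow _ (by omega)) ⟨z, hz⟩)
      · show (p : R) * y.1 = 0
        obtain ⟨z, hz⟩ := Ideal.mem_span_singleton.mp y.2
        have : (p : R) ^ (r - 1) * (p : R) = 0 := by
          rw [← pow_succ]
          have hrr : r - 1 + 1 = r := by omega
          rw [hrr]; exact aux_ppow_r p r hchar
        rw [hz]; calc (p:R) * ((p:R)^(r-1) * z) = ((p:R)^(r-1) * (p:R)) * z := by ring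
          _ = 0 := by rw [this]; ring
      · intro x; apply Subtype.ext; apply Subtype.ext; rfl
      · intro y; apply Subtype.ext; rfl
    have := aux_card_hom f
    have hcR : Nat.card ((Ideal.span {(p : R) ^ i} : Ideal R)) = c i := rfl
    rw [hcR, hrange, hker] at this
    have : c i = Nat.card (Ideal.span {(p : R) ^ (i+1)} : Ideal R) * c (r - 1) := this
    exact this
  -- telescoping
  have tel : ∀ m, m ≤ r → c (r - m) = c (r - 1) ^ m := by
    intro m
    induction m with
    | zero =>
      intro _
      have h0 : ((p : R)) ^ r = 0 := aux_ppow_r p r hchar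
      simp only [Nat.sub_zero, pow_zero, hc]
      rw [h0]
      have : (Ideal.span {(0 : R)} : Ideal R) = ⊥ := by simp
      rw [this]
      refine Nat.card_eq_one_iff_unique.mpr ⟨⟨fun a b => Subtype.ext (by
          have ha := a.2; have hb := b.2
          simp only [Submodule.mem_bot] at ha hb
          rw [ha, hb])⟩, ⟨0, Submodule.zero_mem _⟩⟩
    | succ m ih =>
      intro hm
      have h1 : r - m = (r - (m+1)) + 1 := by omega
      have := step (r - (m + 1)) (by omega)
      rw [this, ← h1, ih (by omega), pow_succ]
  have hc0 : c 0 = p ^ (r * s) := by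
    simp only [hc, pow_zero]
    have : (Ideal.span {(1 : R)} : Ideal R) = ⊤ := by simp
    rw [this]
    rw [Nat.card_congr Submodule.topEquiv.toEquiv, Nat.card_eq_fintype_card, hcard]
  have key : c (r - 1) ^ r = p ^ (r * s) := by
    have := tel r le_rfl
    simp only [Nat.sub_self] at this
    rw [← this, hc0]
  have hcr1 : c (r - 1) = p ^ s := by
    have h2 : (p ^ s) ^ r = p ^ (r * s) := by rw [← pow_mul, mul_comm]
    have := key.trans h2.symm
    exact Nat.pow_left_injective (n := r) (by omega) this
  -- now the residue field
  have hquot := aux_card_hom (f := (Ideal.Quotient.mk (Ideal.span {(p : R)})).toAddMonoidHom)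
  have hrange : ((Ideal.Quotient.mk (Ideal.span {(p : R)})).toAddMonoidHom).range = ⊤ := by
    rw [AddMonoidHom.range_eq_top]
    exact Ideal.Quotient.mk_surjective
  have hker2 : Nat.card ((Ideal.Quotient.mk (Ideal.span {(p : R)})).toAddMonoidHom).ker = c 1 := by
    refine Nat.card_congr (Equiv.subtypeEquivRight ?_)
    intro x
    show Ideal.Quotient.mk _ x = 0 ↔ _
    rw [Ideal.Quotient.eq_zero_iff_mem]
    simp [Ideal.mem_span_singleton]
  rw [hrange, hker2] at hquot
  have htop : Nat.card (⊤ : AddSubgroup (R ⧸ Ideal.span {(p : R)})) =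
      Nat.card (R ⧸ Ideal.span {(p : R)}) := Nat.card_congr AddSubgroup.topEquiv.toEquiv
  rw [htop] at hquot
  have hc1 : c 1 = c (r - 1) ^ (r - 1) := by
    have := tel (r - 1) (by omega)
    have h1 : r - (r - 1) = 1 := by omega
    rwa [h1] at this
  rw [Nat.card_eq_fintype_card, hcard] at hquot
  -- p^(r*s) = card k * c 1
  have hne : c (r - 1) ^ (r - 1) ≠ 0 := by
    rw [hcr1]; exact pow_ne_zero _ (pow_ne_zero _ hp.pos.ne')
  have : p ^ (r * s) = Nat.card (R ⧸ Ideal.span {(p : R)}) * (c (r-1) ^ (r-1)) := by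
    rw [hquot, hc1]
  rw [← key] at this
  have hr1 : c (r - 1) ^ r = c (r-1) ^ (r - 1) * c (r - 1) := by
    rw [← pow_succ]; congr 1; omega
  rw [hr1] at this
  have := Nat.eq_of_mul_eq_mul_right (Nat.pos_of_ne_zero hne) (by linarith [this] : c (r-1) * (c (r-1) ^ (r-1)) = Nat.card (R ⧸ Ideal.span {(p : R)}) * (c (r-1)^(r-1)))
  rw [← this, hcr1]
end Card

lemma aux_semisimple_reduced (T : Type*) [CommRing T] [IsSemisimpleRing T] : IsReduced T := by
  constructor
  intro x hx
  obtain ⟨n, hn⟩ := hx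
  have hrad : (Module.annihilator T T).IsRadical := IsSemisimpleModule.annihilator_isRadical T T
  have hann : Module.annihilator T T = ⊥ := by
    ext y
    simp only [Module.mem_annihilator, Ideal.mem_bot]
    exact ⟨fun h => by simpa using h 1, fun h m => by rw [h]; simp⟩
  have hx' : x ∈ (Module.annihilator T T).radical := by
    rw [Ideal.mem_radical_iff]
    exact ⟨n, by rw [hn, hann]; simp⟩
  have := hrad hx'
  rwa [hann, Ideal.mem_bot] at this

section Reduced
universe u v
variable (k : Type u) [Field k] (A : Type v) [AddCommGroup A] [Fintype A]

open AddMonoidAlgebra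

noncomputable def auxPhi : AddMonoidAlgebra k A →+* AddMonoidAlgebra (ULift.{v} k) (ULift.{u} A) :=
  liftNCRingHom
    (AddMonoidAlgebra.singleZeroRingHom.comp (ULift.ringEquiv.symm : k ≃+* ULift.{v} k).toRingHom)
    ((AddMonoidAlgebra.of (ULift.{v} k) (ULift.{u} A)).comp
      (AddMonoidHom.toMultiplicative ((AddEquiv.ulift.symm : A ≃+ ULift.{u} A).toAddMonoidHom)))
    (fun x y => mul_comm _ _)

lemma auxPhi_single (a : A) (b : k) :
    auxPhi k A (AddMonoidAlgebra.single a b)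
      = AddMonoidAlgebra.single (ULift.up a) (ULift.up b) := by
  unfold auxPhi liftNCRingHom
  show AddMonoidAlgebra.liftNC _ _ (AddMonoidAlgebra.single a b) = _
  rw [AddMonoidAlgebra.liftNC_single]
  show AddMonoidAlgebra.single 0 (ULift.up b) * AddMonoidAlgebra.single (ULift.up a) 1 = _
  rw [AddMonoidAlgebra.single_mul_single]
  simp

lemma auxPhi_apply (x : AddMonoidAlgebra k A) (g : A) :
    (auxPhi k A x).coeff (ULift.up g) = ULift.up (x.coeff g) := by
  classical
  induction x using AddMonoidAlgebra.induction_linear with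
  | zero => simp; rfl
  | add f h hf hh => rw [map_add, AddMonoidAlgebra.coeff_add, AddMonoidAlgebra.coeff_add, Finsupp.add_apply, Finsupp.add_apply, hf, hh]; rfl
  | single a b =>
    rw [auxPhi_single]
    rw [AddMonoidAlgebra.coeff_single, AddMonoidAlgebra.coeff_single, Finsupp.single_apply, Finsupp.single_apply]
    by_cases hab : a = g
    · subst hab; simp
    · rw [if_neg hab, if_neg (by simpa [ULift.up_injective.eq_iff] using hab)]
      rfl

lemma auxPhi_injective : Function.Injective (auxPhi k A) := by
  intro x y hxy
  ext g
  have := congrArg (fun z => z.coeff (ULift.up g)) hxy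
  simp only [auxPhi_apply] at this
  exact congrArg ULift.down this

lemma aux_reduced (hcard : NeZero (Fintype.card A : k)) :
    IsReduced (AddMonoidAlgebra k A) := by
  haveI : NeZero ((Fintype.card (ULift.{u} A) : ULift.{v} k)) := by
    constructor
    rw [Fintype.card_ulift]
    intro h
    have := congrArg (ULift.ringEquiv : ULift.{v} k ≃+* k) h
    rw [map_natCast, map_zero] at this
    exact hcard.out this
  haveI : NeZero ((Nat.card (ULift.{u} A) : ULift.{v} k)) := by
    rw [Nat.card_eq_fintype_card]; infer_instance
  haveI : IsSemisimpleRing (AddMonoidAlgebra (ULift.{v} k) (ULift.{u} A)) := inferInstance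
  haveI : IsReduced (AddMonoidAlgebra (ULift.{v} k) (ULift.{u} A)) :=
    aux_semisimple_reduced _
  exact isReduced_of_injective (auxPhi k A) (auxPhi_injective k A)

end Reduced

open AddMonoidAlgebra

section GroupAlg
variable {R : Type*} [CommRing R] {A : Type*} [AddCommGroup A] [Fintype A]

lemma aux_castp (p n : ℕ) :
    ((p : AddMonoidAlgebra R A)) ^ n = AddMonoidAlgebra.single 0 ((p : R) ^ n) := by
  have h1 : ((p : AddMonoidAlgebra R A)) = AddMonoidAlgebra.singleZeroRingHom ((p : ℕ) : R) :=
    (map_natCast AddMonoidAlgebra.singleZeroRingHom p).symm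
  rw [h1, ← map_pow]
  rfl

lemma aux_pmul_apply (p n : ℕ) (w : AddMonoidAlgebra R A) (g : A) :
    ((p : AddMonoidAlgebra R A) ^ n * w).coeff g = (p : R) ^ n * w.coeff g := by
  rw [aux_castp, AddMonoidAlgebra.coeff_single_zero_mul]

lemma aux_factor (c : R) (x : AddMonoidAlgebra R A) (h : ∀ g, c ∣ x.coeff g) :
    ∃ w : AddMonoidAlgebra R A, x = AddMonoidAlgebra.single 0 c * w := by
  refine ⟨AddMonoidAlgebra.ofCoeff (Finsupp.equivFunOnFinite.symm (fun g => Classical.choose (h g))), ?_⟩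
  ext g
  rw [AddMonoidAlgebra.coeff_single_zero_mul]
  have : x.coeff g = c * Classical.choose (h g) := Classical.choose_spec (h g)
  rw [this]
  congr 1

lemma aux_mem_span_iff (p n : ℕ) (x : AddMonoidAlgebra R A) :
    x ∈ Ideal.span {((p : AddMonoidAlgebra R A)) ^ n} ↔ ∀ g, (p : R) ^ n ∣ x.coeff g := by
  rw [Ideal.mem_span_singleton]
  constructor
  · rintro ⟨w, rfl⟩ g
    rw [aux_pmul_apply]
    exact ⟨w.coeff g, rfl⟩
  · intro h
    obtain ⟨w, hw⟩ := aux_factor _ x h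
    exact ⟨w, by rw [hw, aux_castp]⟩

noncomputable def auxSigma : AddMonoidAlgebra R A ≃ₐ[R] AddMonoidAlgebra R A :=
  AddMonoidAlgebra.domCongr R R (AddEquiv.neg A)

lemma auxSigma_apply (x : AddMonoidAlgebra R A) (g : A) :
    (auxSigma x).coeff g = x.coeff (-g) := by
  unfold auxSigma
  rw [AddMonoidAlgebra.coeff_domCongr]
  rfl

lemma auxSigma_single (a : A) (b : R) :
    auxSigma (AddMonoidAlgebra.single a b) = AddMonoidAlgebra.single (-a) b := by
  unfold auxSigma
  rw [AddMonoidAlgebra.domCongr_single]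
  rfl

lemma aux_Bval (u v : AddMonoidAlgebra R A) :
    ∑ g : A, u.coeff g * v.coeff g = (u * auxSigma v).coeff 0 := by
  classical
  induction u using AddMonoidAlgebra.induction_linear with
  | zero => simp
  | add f h hf hh =>
    rw [add_mul, AddMonoidAlgebra.coeff_add (f * auxSigma v), Finsupp.add_apply, ← hf, ← hh, ← Finset.sum_add_distrib]
    exact Finset.sum_congr rfl (fun g _ => by rw [AddMonoidAlgebra.coeff_add, Finsupp.add_apply, add_mul])
  | single a b =>
    rw [AddMonoidAlgebra.coeff_single_mul_apply, auxSigma_apply]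
    simp only [neg_zero, add_zero, neg_add, neg_neg]
    simp [AddMonoidAlgebra.coeff_single, Finsupp.single_apply, ite_mul, Finset.sum_ite_eq]

end GroupAlg

section GroupAlg2
variable {R : Type*} [CommRing R] {A : Type*} [AddCommGroup A] [Fintype A]

lemma aux_shift (u v : AddMonoidAlgebra R A) (h : A) :
    (u * auxSigma v).coeff h = ∑ g : A, u.coeff g * ((AddMonoidAlgebra.single h (1:R) * v : AddMonoidAlgebra R A).coeff g) := by
  rw [aux_Bval u (AddMonoidAlgebra.single h 1 * v), map_mul, auxSigma_single,
    mul_left_comm, AddMonoidAlgebra.coeff_single_mul_apply]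
  simp

noncomputable def auxMap {K : Type*} [CommRing K] (f : R →+* K) :
    AddMonoidAlgebra R A →+* AddMonoidAlgebra K A :=
  AddMonoidAlgebra.liftNCRingHom (AddMonoidAlgebra.singleZeroRingHom.comp f)
    (AddMonoidAlgebra.of K A) (fun x y => mul_comm _ _)

lemma auxMap_single {K : Type*} [CommRing K] (f : R →+* K) (a : A) (b : R) :
    auxMap f (AddMonoidAlgebra.single a b) = AddMonoidAlgebra.single a (f b) := by
  unfold auxMap AddMonoidAlgebra.liftNCRingHom
  show AddMonoidAlgebra.liftNC _ _ (AddMonoidAlgebra.single a b) = _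
  rw [AddMonoidAlgebra.liftNC_single]
  show AddMonoidAlgebra.single 0 (f b) * AddMonoidAlgebra.single a 1 = _
  rw [AddMonoidAlgebra.single_mul_single]
  simp

lemma auxMap_apply {K : Type*} [CommRing K] (f : R →+* K) (x : AddMonoidAlgebra R A) (g : A) :
    (auxMap f x).coeff g = f (x.coeff g) := by
  classical
  induction x using AddMonoidAlgebra.induction_linear with
  | zero => simp
  | add u w hu hw => rw [map_add, AddMonoidAlgebra.coeff_add, AddMonoidAlgebra.coeff_add, Finsupp.add_apply, Finsupp.add_apply, hu, hw, map_add]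
  | single a b =>
    rw [auxMap_single, AddMonoidAlgebra.coeff_single, AddMonoidAlgebra.coeff_single, Finsupp.single_apply, Finsupp.single_apply, apply_ite f, map_zero]

lemma aux_frob {K : Type*} [CommRing K] (f : R →+* K) (p e : ℕ) [Fact p.Prime] [CharP K p]
    (hN : ∀ a : A, (p ^ e) • a = -a) (hK : ∀ c : K, c ^ (p ^ e) = c)
    (v : AddMonoidAlgebra R A) :
    auxMap f (auxSigma v) = (auxMap f v) ^ (p ^ e) := by
  haveI : CharP (AddMonoidAlgebra K A) p :=
    charP_of_injective_ringHom (f := AddMonoidAlgebra.singleZeroRingHom (R := K) (M := A))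
      (fun x y hxy => by
        have := congrArg (fun z : AddMonoidAlgebra K A => z.coeff 0) hxy
        simpa [AddMonoidAlgebra.singleZeroRingHom] using this) p
  induction v using AddMonoidAlgebra.induction_linear with
  | zero =>
    rw [map_zero, map_zero, zero_pow]
    exact pow_ne_zero _ (Fact.out : p.Prime).ne_zero
  | add u w hu hw =>
    rw [map_add, map_add, map_add, hu, hw, add_pow_char_pow]
  | single a b =>
    rw [auxSigma_single, auxMap_single, auxMap_single, AddMonoidAlgebra.single_pow, hN, hK]

end GroupAlg2

/-- For `r` even and a finite abelian group `A` of exponent `M` with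
`gcd(p,|A|) = 1`, if `(M, p^s)` is good (i.e. `M ∣ p^{st} + 1` for some
`t ≥ 1`), then the only Euclidean self-dual ideal of the group ring
`GR(p^r,s)[A]` is `p^{r/2}·GR(p^r,s)[A]`. -/
theorem unique_euclidean_self_dual_abelian_code
    (p r s : ℕ) (hp : p.Prime) (hr : 1 ≤ r) (hreven : Even r) (hs : 1 ≤ s)
    (R : Type*) [CommRing R] [Fintype R] [IsLocalRing R]
    (hchar : CharP R (p ^ r)) (hcard : Fintype.card R = p ^ (r * s))
    (hmax : IsLocalRing.maximalIdeal R = Ideal.span {(p : R)})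
    (A : Type*) [AddCommGroup A] [Fintype A]
    (hA : ¬ p ∣ Fintype.card A)
    (M : ℕ) (hM : M = AddMonoid.exponent A)
    (hgood : ∃ t : ℕ, 1 ≤ t ∧ M ∣ p ^ (s * t) + 1) :
    ∀ C : Ideal (AddMonoidAlgebra R A),
      (∀ v : AddMonoidAlgebra R A,
        v ∈ C ↔ ∀ u ∈ C, ∑ g : A, u.coeff g * v.coeff g = 0) ↔
      C = Ideal.span {((p : AddMonoidAlgebra R A) ^ (r / 2))} := by
  classical
  obtain ⟨t, ht1, htM⟩ := hgood
  obtain ⟨m, hm⟩ := hreven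
  have hm1 : 1 ≤ m := by omega
  have hrm : r / 2 = m := by omega
  haveI : Fact p.Prime := ⟨hp⟩
  set I : Ideal R := Ideal.span {(p : R)} with hI
  haveI hImax : I.IsMaximal := hmax ▸ IsLocalRing.maximalIdeal.isMaximal R
  letI : Field (R ⧸ I) := Ideal.Quotient.field I
  haveI : Finite (R ⧸ I) := Quotient.finite _
  letI : Fintype (R ⧸ I) := Fintype.ofFinite _
  have hcardk : Fintype.card (R ⧸ I) = p ^ s := by
    rw [← Nat.card_eq_fintype_card]
    exact aux_card_res p r s hp hr hchar hcard hmax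
  have hp0 : ((p : ℕ) : R ⧸ I) = 0 := by
    have : ((p : ℕ) : R ⧸ I) = Ideal.Quotient.mk I ((p : ℕ) : R) := by
      rw [map_natCast]
    rw [this, Ideal.Quotient.eq_zero_iff_mem]
    exact Ideal.mem_span_singleton_self _
  haveI hchark : CharP (R ⧸ I) p := by
    have hdvd : ringChar (R ⧸ I) ∣ p := ringChar.dvd hp0
    rcases hp.eq_one_or_self_of_dvd _ hdvd with h1 | h1
    · exact absurd h1 (CharP.ringChar_ne_one)
    · rw [← h1]; exact ringChar.charP _
  haveI : NeZero ((Fintype.card A : ℕ) : R ⧸ I) := by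
    constructor
    rw [Ne, CharP.cast_eq_zero_iff (R ⧸ I) p]
    exact hA
  haveI : IsReduced (AddMonoidAlgebra (R ⧸ I) A) := aux_reduced _ _ inferInstance
  set π : AddMonoidAlgebra R A →+* AddMonoidAlgebra (R ⧸ I) A :=
    auxMap (Ideal.Quotient.mk I) with hπ
  have hπ0 : ∀ v : AddMonoidAlgebra R A, π v = 0 ↔ ∀ g, (p : R) ∣ v.coeff g := by
    intro v
    constructor
    · intro h g
      have := congrArg (fun z : AddMonoidAlgebra (R ⧸ I) A => z.coeff g) h
      simp only [hπ, auxMap_apply, AddMonoidAlgebra.coeff_zero, Finsupp.coe_zero, Pi.zero_apply] at this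
      rw [Ideal.Quotient.eq_zero_iff_mem, hI, Ideal.mem_span_singleton] at this
      exact this
    · intro h
      ext g
      rw [hπ, auxMap_apply, AddMonoidAlgebra.coeff_zero, Finsupp.zero_apply, Ideal.Quotient.eq_zero_iff_mem, hI,
        Ideal.mem_span_singleton]
      exact h g
  -- Frobenius property
  have hK : ∀ c : R ⧸ I, c ^ (p ^ (s * t)) = c := by
    intro c
    rw [pow_mul, ← hcardk]
    exact FiniteField.pow_card_pow t c
  have hN : ∀ a : A, (p ^ (s * t)) • a = -a := by
    intro a
    obtain ⟨c, hc⟩ := htM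
    have hMa : M • a = 0 := by rw [hM]; exact AddMonoid.exponent_nsmul_eq_zero a
    have h0 : (p ^ (s * t) + 1) • a = 0 := by
      rw [hc, mul_nsmul, hMa, smul_zero]
    rw [add_nsmul, one_nsmul] at h0
    exact eq_neg_of_add_eq_zero_left h0
  have hfrob : ∀ v : AddMonoidAlgebra R A,
      π (auxSigma v) = (π v) ^ (p ^ (s * t)) :=
    aux_frob (Ideal.Quotient.mk I) p (s * t) hN hK
  -- the candidate ideal
  set D : Ideal (AddMonoidAlgebra R A) :=
    Ideal.span {((p : AddMonoidAlgebra R A)) ^ m} with hD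
  have hDmem : ∀ x : AddMonoidAlgebra R A, x ∈ D ↔ ∀ g, (p : R) ^ m ∣ x.coeff g :=
    fun x => aux_mem_span_iff p m x
  have hppow : (p : R) ^ m * (p : R) ^ m = 0 := by
    rw [← pow_add, ← hm]
    exact aux_ppow_r p r hchar
  have hB0 : ∀ u v : AddMonoidAlgebra R A, (∀ g, (p : R) ^ m ∣ u.coeff g) →
      (∀ g, (p : R) ^ m ∣ v.coeff g) → ∑ g : A, u.coeff g * v.coeff g = 0 := by
    intro u v hu hv
    refine Finset.sum_eq_zero (fun g _ => ?_)
    obtain ⟨a, ha⟩ := hu g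
    obtain ⟨b, hb⟩ := hv g
    rw [ha, hb]
    calc (p:R)^m * a * ((p:R)^m * b) = ((p:R)^m * (p:R)^m) * (a * b) := by ring
      _ = 0 := by rw [hppow]; ring
  intro C
  rw [hrm]
  constructor
  · -- self-dual → C = D
    intro hC
    -- L1 : products vanish
    have hmul0 : ∀ u ∈ C, ∀ v ∈ C, u * auxSigma v = 0 := by
      intro u hu v hv
      ext h
      rw [aux_shift, AddMonoidAlgebra.coeff_zero, Finsupp.zero_apply]
      exact (hC _).mp (Ideal.mul_mem_left C _ hv) u hu
    -- L4 : torsion elements die mod p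
    have hL4 : ∀ v : AddMonoidAlgebra R A,
        (p : AddMonoidAlgebra R A) ^ (m - 1) * v ∈ C → π v = 0 := by
      intro v hv
      have hσp : auxSigma ((p : AddMonoidAlgebra R A) ^ (m - 1) * v)
          = (p : AddMonoidAlgebra R A) ^ (m - 1) * auxSigma v := by
        rw [map_mul, map_pow, map_natCast]
      have h1 := hmul0 _ hv _ hv
      rw [hσp] at h1
      have h2 : (p : AddMonoidAlgebra R A) ^ ((m-1) + (m-1)) * (v * auxSigma v) = 0 := by
        rw [pow_add]
        calc (p : AddMonoidAlgebra R A)^(m-1) * (p : AddMonoidAlgebra R A)^(m-1) * (v * auxSigma v)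
            = ((p : AddMonoidAlgebra R A)^(m-1) * v) *
              ((p : AddMonoidAlgebra R A)^(m-1) * auxSigma v) := by ring
          _ = 0 := h1
      have h3 : π (v * auxSigma v) = 0 := by
        rw [hπ0]
        intro g
        have h4 : (p : R) ^ ((m-1)+(m-1)) * ((v * auxSigma v).coeff g) = 0 := by
          rw [← aux_pmul_apply, h2, AddMonoidAlgebra.coeff_zero, Finsupp.zero_apply]
        have h5 : (p : R) ^ (r - ((m-1)+(m-1))) ∣ (v * auxSigma v).coeff g :=
          aux_ann p r hp hchar hmax (i := (m-1)+(m-1)) (by omega)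
            (by rw [mul_comm]; exact h4)
        have h6 : r - ((m-1)+(m-1)) = 2 := by omega
        rw [h6] at h5
        exact dvd_trans (dvd_pow_self (p:R) two_ne_zero) h5
      rw [map_mul, hfrob] at h3
      have h7 : (π v) ^ (p ^ (s * t) + 1) = 0 := by
        rw [pow_succ, mul_comm ((π v) ^ (p ^ (s*t))), ← h3]
      exact IsNilpotent.eq_zero ⟨_, h7⟩
    -- L5 : C ⊆ D
    have hCD : C ≤ D := by
      intro u hu
      have key : ∀ i, i ≤ m → (p : AddMonoidAlgebra R A) ^ i ∣ u := by
        intro i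
        induction i with
        | zero => intro _; simpa using one_dvd u
        | succ i ih =>
          intro hi
          obtain ⟨w, hw⟩ := ih (by omega)
          have hwC : (p : AddMonoidAlgebra R A) ^ (m - 1) * w ∈ C := by
            have heq : (p : AddMonoidAlgebra R A) ^ (m - 1) * w
                = (p : AddMonoidAlgebra R A) ^ (m - 1 - i) * u := by
              rw [hw]
              calc (p : AddMonoidAlgebra R A) ^ (m-1) * w
                  = (p : AddMonoidAlgebra R A) ^ ((m-1-i) + i) * w := by
                    congr 2; omega
                _ = (p : AddMonoidAlgebra R A) ^ (m-1-i) *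
                    ((p : AddMonoidAlgebra R A) ^ i * w) := by rw [pow_add]; ring
            rw [heq]
            exact Ideal.mul_mem_left C _ hu
          have hw0 : ∀ g, (p : R) ∣ w.coeff g := (hπ0 w).mp (hL4 w hwC)
          obtain ⟨w', hw'⟩ := aux_factor (p : R) w hw0
          refine ⟨w', ?_⟩
          rw [hw, hw']
          have : AddMonoidAlgebra.single (0 : A) ((p : R))
              = (p : AddMonoidAlgebra R A) ^ 1 := by rw [aux_castp, pow_one]
          rw [this, pow_succ]
          ring
      exact Ideal.mem_span_singleton.mpr (key m le_rfl)
    -- D ⊆ C by duality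
    have hDC : D ≤ C := by
      intro v hv
      refine (hC v).mpr (fun u hu => ?_)
      exact hB0 u v ((hDmem u).mp (hCD hu)) ((hDmem v).mp hv)
    exact le_antisymm hCD hDC
  · -- C = D → self-dual
    intro hCD
    subst hCD
    intro v
    constructor
    · intro hv u hu
      exact hB0 u v ((hDmem u).mp hu) ((hDmem v).mp hv)
    · intro hv
      rw [hDmem]
      intro g
      have hu : AddMonoidAlgebra.single g ((p : R) ^ m) ∈ D := by
        rw [hDmem]
        intro g'
        rw [AddMonoidAlgebra.coeff_single, Finsupp.single_apply]
        by_cases hgg : g = g'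
        · rw [if_pos hgg]
        · rw [if_neg hgg]; exact dvd_zero _
      have := hv _ hu
      have hsum : ∑ g' : A, (AddMonoidAlgebra.single g ((p : R) ^ m) : AddMonoidAlgebra R A).coeff g' * v.coeff g'
          = (p : R) ^ m * v.coeff g := by
        simp [AddMonoidAlgebra.coeff_single, Finsupp.single_apply, ite_mul, Finset.sum_ite_eq]
      rw [hsum] at this
      have h5 : (p : R) ^ (r - m) ∣ v.coeff g :=
        aux_ann p r hp hchar hmax (i := m) (by omega) (by rw [mul_comm]; exact this)
      have h6 : r - m = m := by omega
      rwa [h6] at h5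
end
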